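/- arXiv:1705.09797 — 3 statements merged into one kernel-verified Lean document; each statement's English description precedes it below -/
import Mathlib

section
/- Let G be a finite connected simple 4-chordal graph, let x be a vertex and uv an edge of G with d_G(u,x) = d_G(v,x). Then G contains, as an isometric subgraph, a building B(w|uv) — a chain of k ≥ 0 four-cycles ending with a triangle with apex w, whose outermost edge is uv — where the apex w lies in I(x,u) ∩ I(x,v), the set of vertices on shortest paths between x and u and between x and v. -/
open SimpleGraph

/-- `f` realizes `H` as an isometric subgraph of `G`: `f` is injective, maps edges of `H`
to edges of `G`, and the distance in `G` between any two images equals the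
distance in `H`. -/
def IsIsometricCopy {W V : Type} (H : SimpleGraph W) (G : SimpleGraph V) (f : W → V) : Prop :=
  Function.Injective f ∧ (∀ a b : W, H.Adj a b → G.Adj (f a) (f b)) ∧
  ∀ a b : W, G.dist (f a) (f b) = H.dist a b

/-- The interval `I(u,v)`: all vertices lying on shortest paths between `u` and `v`. -/
def interval {V : Type} (G : SimpleGraph V) (u v : V) : Set V :=
  {z : V | G.dist u z + G.dist z v = G.dist u v}

/-- The building `B(w|uv)` made of a chain of `k` four-cycles ending with a triangle:
vertices `u_0, …, u_k` (the `some (Sum.inl i)`), `v_0, …, v_k` (the `some (Sum.inr i)`)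
and the apex `w = none`; edges `u_i u_{i+1}`, `v_i v_{i+1}`, the rungs `u_i v_i`,
and the triangle edges `u_k w`, `v_k w`. The outermost edge is `u_0 v_0`. -/
def buildingGraph (k : ℕ) : SimpleGraph (Option (Fin (k + 1) ⊕ Fin (k + 1))) :=
  SimpleGraph.fromRel fun a b =>
    match a, b with
    | some (Sum.inl i), some (Sum.inl j) => (j : ℕ) = (i : ℕ) + 1
    | some (Sum.inr i), some (Sum.inr j) => (j : ℕ) = (i : ℕ) + 1
    | some (Sum.inl i), some (Sum.inr j) => i = j
    | some (Sum.inl i), none => (i : ℕ) = k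
    | some (Sum.inr i), none => (i : ℕ) = k
    | _, _ => False

/-- A cycle of `G` is induced (chordless) if any edge of `G` joining two vertices of
the cycle is an edge of the cycle. -/
def IsInducedCycle {V : Type} (G : SimpleGraph V) {v : V} (p : G.Walk v v) : Prop :=
  p.IsCycle ∧ ∀ a b : V, a ∈ p.support → b ∈ p.support → G.Adj a b → s(a, b) ∈ p.edges

/-- `G` is `k`-chordal: every induced cycle of `G` has length at most `k`. -/
def KChordal {V : Type} (G : SimpleGraph V) (k : ℕ) : Prop :=
  ∀ (v : V) (p : G.Walk v v), IsInducedCycle G p → p.length ≤ k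

set_option maxHeartbeats 2000000

variable {V : Type} {G : SimpleGraph V}


lemma adj_dist_eq_one (h : G.Adj a b) : G.dist a b = 1 :=
  (SimpleGraph.dist_eq_one_iff_adj).2 h

lemma dist_le_succ_of_adj (hG : G.Connected) (h : G.Adj b c) (a : V) :
    G.dist a c ≤ G.dist a b + 1 := by
  calc G.dist a c ≤ G.dist a b + G.dist b c := hG.dist_triangle
  _ = G.dist a b + 1 := by rw [adj_dist_eq_one h]

/-- vertices along a geodesic -/
lemma exists_geodesic_fn (hG : G.Connected) (a b : V) (t : ℕ) (h : G.dist a b = t) :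
    ∃ g : ℕ → V, g 0 = a ∧ g t = b ∧ (∀ i, i < t → G.Adj (g i) (g (i+1))) ∧
      (∀ i j, i ≤ j → j ≤ t → G.dist (g i) (g j) = j - i) := by
  obtain ⟨p, hp⟩ := hG.exists_walk_length_eq_dist a b
  refine ⟨fun i => p.getVert i, p.getVert_zero, ?_, ?_, ?_⟩
  · rw [← h, ← hp]; exact p.getVert_length
  · intro i hi; exact p.adj_getVert_succ (by omega)
  · intro i j hij hjt
    have hup : ∀ i j, i ≤ j → j ≤ t → G.dist (p.getVert i) (p.getVert j) ≤ j - i := by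
      intro i j hij hjt
      induction j with
      | zero => simp_all
      | succ m ih =>
        rcases Nat.lt_or_ge i (m+1) with hlt | hge
        · have h1 := ih (by omega) (by omega)
          have h2 : G.Adj (p.getVert m) (p.getVert (m+1)) := p.adj_getVert_succ (by omega)
          have := dist_le_succ_of_adj hG h2 (p.getVert i)
          omega
        · have : i = m + 1 := by omega
          subst this; simp
    have h1 := hup i j hij hjt
    have h2 := hup 0 i (by omega) (by omega)
    have h3 := hup j t hjt (le_refl t)
    rw [p.getVert_zero] at h2
    have hgl : p.getVert t = b := by rw [← h, ← hp]; exact p.getVert_length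
    rw [hgl] at h3
    have t1 : G.dist a (p.getVert j) ≤ G.dist a (p.getVert i) + G.dist (p.getVert i) (p.getVert j) :=
      hG.dist_triangle
    have t2 : G.dist a b ≤ G.dist a (p.getVert j) + G.dist (p.getVert j) b := hG.dist_triangle
    simp only []
    omega

/-- build a walk along `c 0, c 1, ..., c i` -/
def pathAux (c : ℕ → V) : (i : ℕ) → (∀ j, j < i → G.Adj (c j) (c (j+1))) → G.Walk (c 0) (c i)
  | 0, _ => .nil
  | (i+1), h => (pathAux c i (fun j hj => h j (by omega))).concat (h i (by omega))

lemma pathAux_length (c : ℕ → V) (i : ℕ) (h : ∀ j, j < i → G.Adj (c j) (c (j+1))) :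
    (pathAux c i h).length = i := by
  induction i with
  | zero => rfl
  | succ m ih => rw [pathAux, SimpleGraph.Walk.length_concat, ih]

lemma pathAux_support (c : ℕ → V) (i : ℕ) (h : ∀ j, j < i → G.Adj (c j) (c (j+1))) :
    (pathAux c i h).support = (List.range (i+1)).map c := by
  induction i with
  | zero => rw [List.range_succ]; simp [pathAux]
  | succ m ih =>
    rw [pathAux, SimpleGraph.Walk.support_concat, ih, List.range_succ (n := m+1)]
    simp [List.concat_eq_append]

lemma pathAux_edges (c : ℕ → V) (i : ℕ) (h : ∀ j, j < i → G.Adj (c j) (c (j+1))) :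
    (pathAux c i h).edges = (List.range i).map (fun j => s(c j, c (j+1))) := by
  induction i with
  | zero => simp [pathAux]
  | succ m ih =>
    rw [pathAux, SimpleGraph.Walk.edges_concat, ih, List.range_succ (n := m)]
    simp [List.concat_eq_append]

lemma no_big_cycle (hch : KChordal G 4) (m : ℕ) (hm : 5 ≤ m) (c : ℕ → V)
    (hadj : ∀ i, i + 1 < m → G.Adj (c i) (c (i+1))) (hwrap : G.Adj (c (m-1)) (c 0))
    (hinj : ∀ i j, i < m → j < m → c i = c j → i = j)
    (hcord : ∀ i j, i < m → j < m → G.Adj (c i) (c j) →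
      j = i + 1 ∨ i = j + 1 ∨ (i = 0 ∧ j = m-1) ∨ (j = 0 ∧ i = m-1)) : False := by
  classical
  have hadj' : ∀ j, j < m - 1 → G.Adj (c j) (c (j+1)) := fun j hj => hadj j (by omega)
  set P : G.Walk (c 0) (c (m-1)) := pathAux c (m-1) hadj' with hP
  set W : G.Walk (c 0) (c 0) := P.concat hwrap with hW
  have hlen : W.length = m := by
    rw [hW, SimpleGraph.Walk.length_concat, hP, pathAux_length]; omega
  have hsup : W.support = (List.range m).map c ++ [c 0] := by
    rw [hW, SimpleGraph.Walk.support_concat, hP, pathAux_support]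
    have : m - 1 + 1 = m := by omega
    rw [this]
  have hedg : W.edges = ((List.range (m-1)).map (fun j => s(c j, c (j+1)))) ++ [s(c (m-1), c 0)] := by
    rw [hW, SimpleGraph.Walk.edges_concat, hP, pathAux_edges]; simp [List.concat_eq_append]
  have hmemsup : ∀ a, a ∈ W.support ↔ ∃ i, i < m ∧ c i = a := by
    intro a
    rw [hsup]
    simp only [List.mem_append, List.mem_map, List.mem_range, List.mem_singleton]
    constructor
    · rintro (⟨i, hi, rfl⟩ | rfl)
      · exact ⟨i, hi, rfl⟩
      · exact ⟨0, by omega, rfl⟩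
    · rintro ⟨i, hi, rfl⟩; exact Or.inl ⟨i, hi, rfl⟩
  have hedgemem : ∀ i, i < m → s(c i, c ((i+1) % m)) ∈ W.edges := by
    intro i hi
    rw [hedg]
    rcases Nat.lt_or_ge i (m-1) with h1 | h1
    · apply List.mem_append.mpr; left
      have : (i+1) % m = i + 1 := Nat.mod_eq_of_lt (by omega)
      rw [this]
      exact List.mem_map.mpr ⟨i, List.mem_range.mpr h1, rfl⟩
    · apply List.mem_append.mpr; right
      have hieq : i = m - 1 := by omega
      have : (i+1) % m = 0 := by
        have h2 : i + 1 = m := by omega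
        rw [h2]; simp
      rw [this, hieq]; simp
  -- the cycle is induced
  have hcyc : W.IsCycle := by
    constructor
    constructor
    constructor
    · -- edges nodup
      rw [hedg]
      refine List.Nodup.append ?_ (by simp) ?_
      · rw [List.nodup_map_iff_inj_on List.nodup_range]
        intro i hi j hj hij
        simp only [List.mem_range] at hi hj
        rw [Sym2.eq_iff] at hij
        rcases hij with ⟨h1, h2⟩ | ⟨h1, h2⟩
        · exact hinj i j (by omega) (by omega) h1
        · have e1 := hinj i (j+1) (by omega) (by omega) h1
          have e2 := hinj (i+1) j (by omega) (by omega) h2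
          omega
      · intro e he1 he2
        simp only [List.mem_singleton] at he2
        subst he2
        simp only [List.mem_map, List.mem_range] at he1
        obtain ⟨j, hj, hje⟩ := he1
        rw [Sym2.eq_iff] at hje
        rcases hje with ⟨h1, h2⟩ | ⟨h1, h2⟩
        · have := hinj j (m-1) (by omega) (by omega) h1
          omega
        · have e1 := hinj j 0 (by omega) (by omega) h1
          have e2 := hinj (j+1) (m-1) (by omega) (by omega) h2
          omega
    · -- not nil
      intro hnil
      have := hlen
      rw [hnil] at this
      simp at this; omega
    · -- support tail nodup
      have htail : W.support.tail = ((List.range (m-1)).map (fun i => c (i+1))) ++ [c 0] := by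
      -- range m = 0 :: map succ (range (m-1))
        rw [hsup]
        have hr : List.range m = 0 :: (List.range (m-1)).map Nat.succ := by
          have : m = (m-1) + 1 := by omega
          conv_lhs => rw [this]
          rw [List.range_succ_eq_map]
        rw [hr]
        simp [List.map_map, Function.comp_def]
      rw [htail]
      refine List.Nodup.append ?_ (by simp) ?_
      · rw [List.nodup_map_iff_inj_on List.nodup_range]
        intro i hi j hj hij
        simp only [List.mem_range] at hi hj
        have := hinj (i+1) (j+1) (by omega) (by omega) hij
        omega
      · intro a ha1 ha2
        simp only [List.mem_singleton] at ha2
        subst ha2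
        simp only [List.mem_map, List.mem_range] at ha1
        obtain ⟨j, hj, hje⟩ := ha1
        have := hinj (j+1) 0 (by omega) (by omega) hje
        omega
  have hind : IsInducedCycle G W := by
    refine ⟨hcyc, ?_⟩
    intro a b ha hb hab
    obtain ⟨i, hi, rfl⟩ := (hmemsup a).1 ha
    obtain ⟨j, hj, rfl⟩ := (hmemsup b).1 hb
    rcases hcord i j hi hj hab with h | h | ⟨h1, h2⟩ | ⟨h1, h2⟩
    · subst h
      have hmod : (i+1) % m = i + 1 := Nat.mod_eq_of_lt hj
      have := hedgemem i hi
      rwa [hmod] at this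
    · subst h
      have hmod : (j+1) % m = j + 1 := Nat.mod_eq_of_lt hi
      have := hedgemem j hj
      rw [hmod] at this
      rwa [Sym2.eq_swap] at this
    · subst h1; subst h2
      have := hedgemem (m-1) (by omega)
      have hmod : (m-1+1) % m = 0 := by
        have : m - 1 + 1 = m := by omega
        rw [this]; simp
      rw [hmod] at this
      rwa [Sym2.eq_swap] at this
    · subst h1; subst h2
      have := hedgemem (m-1) (by omega)
      have hmod : (m-1+1) % m = 0 := by
        have : m - 1 + 1 = m := by omega
        rw [this]; simp
      rwa [hmod] at this
  have := hch _ W hind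
  omega

/-- A building skeleton with apex datum. -/
structure Bldg (G : SimpleGraph V) (x u v : V) (n : ℕ) where
  k : ℕ
  U : ℕ → V
  Vv : ℕ → V
  w : V
  hU0 : U 0 = u
  hV0 : Vv 0 = v
  adjU : ∀ i, i < k → G.Adj (U i) (U (i+1))
  adjV : ∀ i, i < k → G.Adj (Vv i) (Vv (i+1))
  rung : ∀ i, i ≤ k → G.Adj (U i) (Vv i)
  apexU : G.Adj (U k) w
  apexV : G.Adj (Vv k) w
  lvlU : ∀ i, i ≤ k → G.dist x (U i) + i = n
  lvlV : ∀ i, i ≤ k → G.dist x (Vv i) + i = n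
  lvlw : G.dist x w + (k+1) = n

namespace Bldg

variable {x u v : V} {n : ℕ}

def symm (B : Bldg G x u v n) : Bldg G x v u n where
  k := B.k
  U := B.Vv
  Vv := B.U
  w := B.w
  hU0 := B.hV0
  hV0 := B.hU0
  adjU := B.adjV
  adjV := B.adjU
  rung := fun i hi => (B.rung i hi).symm
  apexU := B.apexV
  apexV := B.apexU
  lvlU := B.lvlV
  lvlV := B.lvlU
  lvlw := B.lvlw

lemma k_lt_n (B : Bldg G x u v n) : B.k < n := by have := B.lvlw; omega

/-- chain distances: `dist (U i) (U j) ≤ j - i`. -/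
lemma chain_dist_le (hG : G.Connected) (c : ℕ → V) (kk : ℕ)
    (hadj : ∀ i, i < kk → G.Adj (c i) (c (i+1))) :
    ∀ i j, i ≤ j → j ≤ kk → G.dist (c i) (c j) ≤ j - i := by
  intro i j hij hjk
  induction j with
  | zero =>
    have hi0 : i = 0 := by omega
    subst hi0
    simp
  | succ m ih =>
    rcases Nat.lt_or_ge i (m+1) with hlt | hge
    · have h1 := ih (by omega) (by omega)
      have h2 : G.dist (c i) (c (m+1)) ≤ G.dist (c i) (c m) + G.dist (c m) (c (m+1)) :=
        hG.dist_triangle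
      have h3 := adj_dist_eq_one (hadj m (by omega))
      omega
    · have : i = m + 1 := by omega
      subst this; simp

lemma distUU (hG : G.Connected) (B : Bldg G x u v n) :
    ∀ i j, i ≤ j → j ≤ B.k → G.dist (B.U i) (B.U j) = j - i := by
  intro i j hij hjk
  have hle := chain_dist_le hG B.U B.k B.adjU i j hij hjk
  have l1 := B.lvlU i (by omega)
  have l2 := B.lvlU j hjk
  have htri : G.dist x (B.U i) ≤ G.dist x (B.U j) + G.dist (B.U j) (B.U i) := hG.dist_triangle
  have hcomm : G.dist (B.U j) (B.U i) = G.dist (B.U i) (B.U j) := SimpleGraph.dist_comm ..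
  omega

lemma distVV (hG : G.Connected) (B : Bldg G x u v n) :
    ∀ i j, i ≤ j → j ≤ B.k → G.dist (B.Vv i) (B.Vv j) = j - i :=
  B.symm.distUU hG

lemma distUW (hG : G.Connected) (B : Bldg G x u v n) :
    ∀ i, i ≤ B.k → G.dist (B.U i) B.w = B.k + 1 - i := by
  intro i hi
  have hle : G.dist (B.U i) B.w ≤ B.k - i + 1 := by
    have h1 := B.distUU hG i B.k hi (le_refl _)
    have h2 : G.dist (B.U i) B.w ≤ G.dist (B.U i) (B.U B.k) + G.dist (B.U B.k) B.w :=
      hG.dist_triangle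
    have h3 := adj_dist_eq_one B.apexU
    omega
  have l1 := B.lvlU i hi
  have l2 := B.lvlw
  have htri : G.dist x (B.U i) ≤ G.dist x B.w + G.dist B.w (B.U i) := hG.dist_triangle
  have hcomm : G.dist B.w (B.U i) = G.dist (B.U i) B.w := SimpleGraph.dist_comm ..
  omega

lemma distVW (hG : G.Connected) (B : Bldg G x u v n) :
    ∀ i, i ≤ B.k → G.dist (B.Vv i) B.w = B.k + 1 - i :=
  B.symm.distUW hG

/-- cross distance upper bound -/
lemma distUV_le (hG : G.Connected) (B : Bldg G x u v n) :
    ∀ i j, i ≤ B.k → j ≤ B.k → G.dist (B.U i) (B.Vv j) ≤ (max i j - min i j) + 1 := by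
  intro i j hi hj
  rcases le_or_gt i j with hij | hij
  · have h1 := B.distUU hG i j hij hj
    have h2 : G.dist (B.U i) (B.Vv j) ≤ G.dist (B.U i) (B.U j) + G.dist (B.U j) (B.Vv j) :=
      hG.dist_triangle
    have h3 := adj_dist_eq_one (B.rung j hj)
    have : max i j = j := by omega
    have : min i j = i := by omega
    omega
  · have h1 := B.distVV hG j i (by omega) hi
    have h2 : G.dist (B.U i) (B.Vv j) ≤ G.dist (B.U i) (B.Vv i) + G.dist (B.Vv i) (B.Vv j) :=
      hG.dist_triangle
    have h3 := adj_dist_eq_one (B.rung i hi)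
    have hc : G.dist (B.Vv i) (B.Vv j) = G.dist (B.Vv j) (B.Vv i) := SimpleGraph.dist_comm ..
    have : max i j = i := by omega
    have : min i j = j := by omega
    omega

/-- cross distance lower bound from levels -/
lemma distUV_ge (hG : G.Connected) (B : Bldg G x u v n) :
    ∀ i j, i ≤ B.k → j ≤ B.k → (max i j - min i j) ≤ G.dist (B.U i) (B.Vv j) := by
  intro i j hi hj
  have l1 := B.lvlU i hi
  have l2 := B.lvlV j hj
  have t1 : G.dist x (B.U i) ≤ G.dist x (B.Vv j) + G.dist (B.Vv j) (B.U i) := hG.dist_triangle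
  have t2 : G.dist x (B.Vv j) ≤ G.dist x (B.U i) + G.dist (B.U i) (B.Vv j) := hG.dist_triangle
  have hc : G.dist (B.Vv j) (B.U i) = G.dist (B.U i) (B.Vv j) := SimpleGraph.dist_comm ..
  omega

def prepend (B : Bldg G x a b (n-1)) (hn : 1 ≤ n) (u v : V)
    (hua : G.Adj u a) (hvb : G.Adj v b) (huv : G.Adj u v)
    (hu : G.dist x u = n) (hv : G.dist x v = n) : Bldg G x u v n where
  k := B.k + 1
  U := fun i => if i = 0 then u else B.U (i-1)
  Vv := fun i => if i = 0 then v else B.Vv (i-1)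
  w := B.w
  hU0 := by simp
  hV0 := by simp
  adjU := by
    intro i hi
    rcases Nat.eq_zero_or_pos i with rfl | hpos
    · simpa [B.hU0] using hua
    · have h1 : ¬ (i = 0) := by omega
      have h2 : ¬ (i + 1 = 0) := by omega
      simp only [h1, h2, if_false]
      have : i - 1 + 1 = i + 1 - 1 := by omega
      rw [← this]
      exact B.adjU (i-1) (by omega)
  adjV := by
    intro i hi
    rcases Nat.eq_zero_or_pos i with rfl | hpos
    · simpa [B.hV0] using hvb
    · have h1 : ¬ (i = 0) := by omega
      have h2 : ¬ (i + 1 = 0) := by omega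
      simp only [h1, h2, if_false]
      have : i - 1 + 1 = i + 1 - 1 := by omega
      rw [← this]
      exact B.adjV (i-1) (by omega)
  rung := by
    intro i hi
    rcases Nat.eq_zero_or_pos i with rfl | hpos
    · simpa using huv
    · have h1 : ¬ (i = 0) := by omega
      simp only [h1, if_false]
      exact B.rung (i-1) (by omega)
  apexU := by
    have h1 : ¬ (B.k + 1 = 0) := by omega
    simp only [h1, if_false]
    simpa using B.apexU
  apexV := by
    have h1 : ¬ (B.k + 1 = 0) := by omega
    simp only [h1, if_false]
    simpa using B.apexV
  lvlU := by
    intro i hi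
    rcases Nat.eq_zero_or_pos i with rfl | hpos
    · simpa using hu
    · have h1 : ¬ (i = 0) := by omega
      simp only [h1, if_false]
      have := B.lvlU (i-1) (by omega)
      omega
  lvlV := by
    intro i hi
    rcases Nat.eq_zero_or_pos i with rfl | hpos
    · simpa using hv
    · have h1 : ¬ (i = 0) := by omega
      simp only [h1, if_false]
      have := B.lvlV (i-1) (by omega)
      omega
  lvlw := by have := B.lvlw; omega

end Bldg

lemma ne_of_lvl {x a b : V} {p q n : ℕ} (h1 : G.dist x a + p = n) (h2 : G.dist x b + q = n)
    (hpq : p ≠ q) : a ≠ b := by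
  rintro rfl; omega

lemma not_adj_of_lvl (hG : G.Connected) {x a b : V} {p q n : ℕ}
    (h1 : G.dist x a + p = n) (h2 : G.dist x b + q = n)
    (h : p + 2 ≤ q ∨ q + 2 ≤ p) : ¬ G.Adj a b := by
  intro had
  have hd := adj_dist_eq_one had
  have t1 : G.dist x b ≤ G.dist x a + G.dist a b := hG.dist_triangle
  have t2 : G.dist x a ≤ G.dist x b + G.dist b a := hG.dist_triangle
  have hc : G.dist b a = G.dist a b := SimpleGraph.dist_comm ..
  omega

/-- a pair of descending chains from `u` and `v` that merge or are joined by a rung at depth `m` -/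
def ClaimConf (G : SimpleGraph V) (x u v : V) (n m : ℕ) : Prop :=
  ∃ A B : ℕ → V, A 0 = u ∧ B 0 = v ∧
    (∀ i, i ≤ m → G.dist x (A i) + i = n) ∧ (∀ i, i ≤ m → G.dist x (B i) + i = n) ∧
    (∀ i, i < m → G.Adj (A i) (A (i+1))) ∧ (∀ i, i < m → G.Adj (B i) (B (i+1))) ∧
    (A m = B m ∨ G.Adj (A m) (B m))

lemma claimConf_swap {x u v : V} {n m : ℕ} (h : ClaimConf G x u v n m) :
    ClaimConf G x v u n m := by
  obtain ⟨A, B, hA0, hB0, hlA, hlB, hcA, hcB, hend⟩ := h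
  refine ⟨B, A, hB0, hA0, hlB, hlA, hcB, hcA, ?_⟩
  rcases hend with h | h
  · exact Or.inl h.symm
  · exact Or.inr h.symm

section ConfBuilders

variable {x u v : V} {n : ℕ} {A B : ℕ → V} {m₀ : ℕ}

lemma conf_trunc_merge {i : ℕ} (him : i ≤ m₀)
    (hA0 : A 0 = u) (hB0 : B 0 = v)
    (hlA : ∀ t, t ≤ m₀ → G.dist x (A t) + t = n) (hlB : ∀ t, t ≤ m₀ → G.dist x (B t) + t = n)
    (hcA : ∀ t, t < m₀ → G.Adj (A t) (A (t+1))) (hcB : ∀ t, t < m₀ → G.Adj (B t) (B (t+1)))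
    (h : A i = B i) : ClaimConf G x u v n i :=
  ⟨A, B, hA0, hB0, fun t ht => hlA t (le_trans ht him), fun t ht => hlB t (le_trans ht him),
    fun t ht => hcA t (by omega), fun t ht => hcB t (by omega), Or.inl h⟩

lemma conf_trunc_rung {i : ℕ} (him : i ≤ m₀)
    (hA0 : A 0 = u) (hB0 : B 0 = v)
    (hlA : ∀ t, t ≤ m₀ → G.dist x (A t) + t = n) (hlB : ∀ t, t ≤ m₀ → G.dist x (B t) + t = n)
    (hcA : ∀ t, t < m₀ → G.Adj (A t) (A (t+1))) (hcB : ∀ t, t < m₀ → G.Adj (B t) (B (t+1)))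
    (h : G.Adj (A i) (B i)) : ClaimConf G x u v n i :=
  ⟨A, B, hA0, hB0, fun t ht => hlA t (le_trans ht him), fun t ht => hlB t (le_trans ht him),
    fun t ht => hcA t (by omega), fun t ht => hcB t (by omega), Or.inr h⟩

/-- from a cross edge `A (i+1) ~ B i` build a merged configuration of depth `i+1`. -/
lemma conf_cross {i : ℕ} (him : i + 1 ≤ m₀)
    (hA0 : A 0 = u) (hB0 : B 0 = v)
    (hlA : ∀ t, t ≤ m₀ → G.dist x (A t) + t = n) (hlB : ∀ t, t ≤ m₀ → G.dist x (B t) + t = n)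
    (hcA : ∀ t, t < m₀ → G.Adj (A t) (A (t+1))) (hcB : ∀ t, t < m₀ → G.Adj (B t) (B (t+1)))
    (h : G.Adj (A (i+1)) (B i)) : ClaimConf G x u v n (i+1) := by
  refine ⟨A, fun t => if t ≤ i then B t else A (i+1), hA0, by simp [hB0], ?_, ?_, ?_, ?_, ?_⟩
  · exact fun t ht => hlA t (le_trans ht him)
  · intro t ht
    by_cases hti : t ≤ i
    · simpa [hti] using hlB t (by omega)
    · have : t = i + 1 := by omega
      subst this
      simpa [hti] using hlA (i+1) him
  · exact fun t ht => hcA t (by omega)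
  · intro t ht
    by_cases hti : t + 1 ≤ i
    · simp only [show t ≤ i by omega, hti, if_true]
      exact hcB t (by omega)
    · have hteq : t = i := by omega
      subst hteq
      simp only [le_refl, if_true, show ¬ (t + 1 ≤ t) by omega, if_false]
      exact h.symm
  · left
    simp [show ¬ (i + 1 ≤ i) by omega]

end ConfBuilders

lemma cord_symmetrize {m : ℕ} {c : ℕ → V}
    (h : ∀ i j, i < m → j < m → i < j → G.Adj (c i) (c j) → j = i + 1 ∨ (i = 0 ∧ j = m-1)) :
    ∀ i j, i < m → j < m → G.Adj (c i) (c j) →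
      j = i + 1 ∨ i = j + 1 ∨ (i = 0 ∧ j = m-1) ∨ (j = 0 ∧ i = m-1) := by
  intro i j hi hj hadj
  rcases lt_trichotomy i j with hij | rfl | hij
  · rcases h i j hi hj hij hadj with h' | h'
    · exact Or.inl h'
    · exact Or.inr (Or.inr (Or.inl h'))
  · exact absurd rfl hadj.ne
  · rcases h j i hj hi hij hadj.symm with h' | h'
    · exact Or.inr (Or.inl h')
    · exact Or.inr (Or.inr (Or.inr h'))

lemma merge_cycle_contra (hG : G.Connected) (hch : KChordal G 4) {x u v : V} {n m₀ : ℕ}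
    (hm₀ : 2 ≤ m₀) (huv : G.Adj u v)
    (hmin : ∀ i, 1 ≤ i → i < m₀ → ¬ ClaimConf G x u v n i)
    {A B : ℕ → V} (hA0 : A 0 = u) (hB0 : B 0 = v)
    (hlA : ∀ t, t ≤ m₀ → G.dist x (A t) + t = n) (hlB : ∀ t, t ≤ m₀ → G.dist x (B t) + t = n)
    (hcA : ∀ t, t < m₀ → G.Adj (A t) (A (t+1))) (hcB : ∀ t, t < m₀ → G.Adj (B t) (B (t+1)))
    (hmerge : A m₀ = B m₀) : False := by
  set m : ℕ := 2*m₀ + 1 with hm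
  set c : ℕ → V := fun idx => if idx ≤ m₀ then A idx else B (2*m₀ - idx) with hc
  have hcA' : ∀ idx, idx ≤ m₀ → c idx = A idx := by intro idx h; simp [hc, h]
  have hcB' : ∀ idx, m₀ < idx → c idx = B (2*m₀ - idx) := by
    intro idx h; simp [hc, show ¬ (idx ≤ m₀) by omega]
  apply no_big_cycle hch m (by omega) c
  · -- consecutive adjacency
    intro idx hidx
    rcases Nat.lt_or_ge idx m₀ with h1 | h1
    · rw [hcA' idx (by omega), hcA' (idx+1) (by omega)]
      exact hcA idx h1
    rcases Nat.eq_or_lt_of_le h1 with h2 | h2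
    · have h2' : idx = m₀ := h2.symm
      subst h2'
      rw [hcA' idx (by omega), hcB' (idx+1) (by omega)]
      rw [hmerge]
      have heq2 : 2*idx - (idx + 1) = idx - 1 := by omega
      rw [heq2]
      have h3 := hcB (idx - 1) (by omega)
      have heq : idx - 1 + 1 = idx := by omega
      rw [heq] at h3
      exact h3.symm
    · rw [hcB' idx (by omega), hcB' (idx+1) (by omega)]
      have h3 := hcB (2*m₀ - idx - 1) (by omega)
      have heq : 2*m₀ - idx - 1 + 1 = 2*m₀ - idx := by omega
      rw [heq] at h3
      have heq2 : 2*m₀ - (idx + 1) = 2*m₀ - idx - 1 := by omega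
      rw [heq2]
      exact h3.symm
  · -- wrap
    rw [hcB' (m-1) (by omega), hcA' 0 (by omega)]
    have : 2*m₀ - (m - 1) = 0 := by omega
    rw [this, hA0, hB0]
    exact huv.symm
  · -- injectivity
    have key : ∀ i j, i < m → j < m → i < j → c i = c j → False := by
      intro i j hi hj hij heq
      by_cases h1 : i ≤ m₀ <;> by_cases h2 : j ≤ m₀
      · rw [hcA' i h1, hcA' j h2] at heq
        exact (ne_of_lvl (hlA i h1) (hlA j h2) (by omega)) heq
      · -- i ≤ m₀ < j
        rw [hcA' i h1, hcB' j (by omega)] at heq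
        by_cases h3 : i = 2*m₀ - j
        · rcases Nat.eq_zero_or_pos i with h4 | h4
          · rw [h4, hA0] at heq
            have h5 : 2*m₀ - j = 0 := by omega
            rw [h5, hB0] at heq
            exact huv.ne heq
          · have heq2 : A i = B i := by rw [heq]; congr 1; omega
            have hconf := conf_trunc_merge (G := G) (i := i) (by omega) hA0 hB0 hlA hlB hcA hcB heq2
            exact hmin i (by omega) (by omega) hconf
        · exact (ne_of_lvl (hlA i h1) (hlB (2*m₀ - j) (by omega)) (by omega)) heq
      · omega
      · rw [hcB' i (by omega), hcB' j (by omega)] at heq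
        exact (ne_of_lvl (hlB (2*m₀ - i) (by omega)) (hlB (2*m₀ - j) (by omega)) (by omega)) heq
    intro i j hi hj heq
    rcases lt_trichotomy i j with h | h | h
    · exact absurd heq (fun hq => key i j hi hj h hq)
    · exact h
    · exact absurd heq.symm (fun hq => key j i hj hi h hq)
  · -- chords
    apply cord_symmetrize
    intro i j hi hj hij hadj
    by_contra hcon
    push_neg at hcon
    obtain ⟨hc1, hc2⟩ := hcon
    by_cases h1 : i ≤ m₀ <;> by_cases h2 : j ≤ m₀
    · -- both on A side; j ≥ i+2 impossible
      rw [hcA' i h1, hcA' j h2] at hadj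
      exact not_adj_of_lvl hG (hlA i h1) (hlA j h2) (by omega) hadj
    · -- i ≤ m₀ < j : A i vs B r, r = 2m₀ - j
      rw [hcA' i h1, hcB' j (by omega)] at hadj
      have hrr : 2*m₀ - j ≤ m₀ - 1 := by omega
      rcases lt_trichotomy i (2*m₀ - j) with hir | hir | hir
      · by_cases hir2 : 2*m₀ - j = i + 1
        · rw [hir2] at hadj
          have hconf := conf_cross (G := G) (i := i) (by omega) hB0 hA0 hlB hlA hcB hcA hadj.symm
          exact hmin (i+1) (by omega) (by omega) (claimConf_swap hconf)
        · exact not_adj_of_lvl hG (hlA i h1) (hlB (2*m₀ - j) (by omega)) (by omega) hadj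
      · rcases Nat.eq_zero_or_pos i with h4 | h4
        · omega
        · rw [← hir] at hadj
          have hconf := conf_trunc_rung (G := G) (i := i) (by omega) hA0 hB0 hlA hlB hcA hcB hadj
          exact hmin i (by omega) (by omega) hconf
      · by_cases hir2 : i = 2*m₀ - j + 1
        · by_cases him : i = m₀
          · omega
          · have hadj2 : G.Adj (A (2*m₀ - j + 1)) (B (2*m₀ - j)) := by rw [← hir2]; exact hadj
            have hconf := conf_cross (G := G) (i := 2*m₀ - j) (by omega) hA0 hB0 hlA hlB hcA hcB hadj2
            exact hmin (2*m₀ - j + 1) (by omega) (by omega) hconf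
        · exact not_adj_of_lvl hG (hlA i h1) (hlB (2*m₀ - j) (by omega)) (by omega) hadj
    · omega
    · rw [hcB' i (by omega), hcB' j (by omega)] at hadj
      exact not_adj_of_lvl hG (hlB (2*m₀ - i) (by omega)) (hlB (2*m₀ - j) (by omega)) (by omega) hadj

lemma noCrossTop (hG : G.Connected) (hch : KChordal G 4) {x u v : V} {n m₀ : ℕ}
    (hm₀ : 2 ≤ m₀) (huv : G.Adj u v)
    (hmin : ∀ i, 1 ≤ i → i < m₀ → ¬ ClaimConf G x u v n i)
    {A B : ℕ → V} (hA0 : A 0 = u) (hB0 : B 0 = v)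
    (hlA : ∀ t, t ≤ m₀ → G.dist x (A t) + t = n) (hlB : ∀ t, t ≤ m₀ → G.dist x (B t) + t = n)
    (hcA : ∀ t, t < m₀ → G.Adj (A t) (A (t+1))) (hcB : ∀ t, t < m₀ → G.Adj (B t) (B (t+1))) :
    ¬ G.Adj (A (m₀ - 1)) (B m₀) := by
  intro hCA
  set m : ℕ := 2*m₀ + 1 with hm
  set c : ℕ → V := fun idx => if idx ≤ m₀ - 1 then A idx else B (2*m₀ - idx) with hc
  have hcA' : ∀ idx, idx ≤ m₀ - 1 → c idx = A idx := by intro idx h; simp [hc, h]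
  have hcB' : ∀ idx, m₀ - 1 < idx → c idx = B (2*m₀ - idx) := by
    intro idx h; simp [hc, show ¬ (idx ≤ m₀ - 1) by omega]
  apply no_big_cycle hch m (by omega) c
  · intro idx hidx
    rcases Nat.lt_or_ge idx (m₀ - 1) with h1 | h1
    · rw [hcA' idx (by omega), hcA' (idx+1) (by omega)]
      exact hcA idx (by omega)
    rcases Nat.eq_or_lt_of_le h1 with h2 | h2
    · have h2' : idx = m₀ - 1 := h2.symm
      rw [hcA' idx (by omega), hcB' (idx+1) (by omega)]
      have heq2 : 2*m₀ - (idx + 1) = m₀ := by omega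
      rw [heq2, h2']
      exact hCA
    · rw [hcB' idx (by omega), hcB' (idx+1) (by omega)]
      have h3 := hcB (2*m₀ - idx - 1) (by omega)
      have heq : 2*m₀ - idx - 1 + 1 = 2*m₀ - idx := by omega
      rw [heq] at h3
      have heq2 : 2*m₀ - (idx + 1) = 2*m₀ - idx - 1 := by omega
      rw [heq2]
      exact h3.symm
  · rw [hcB' (m-1) (by omega), hcA' 0 (by omega)]
    have : 2*m₀ - (m - 1) = 0 := by omega
    rw [this, hA0, hB0]
    exact huv.symm
  · have key : ∀ i j, i < m → j < m → i < j → c i = c j → False := by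
      intro i j hi hj hij heq
      by_cases h1 : i ≤ m₀ - 1 <;> by_cases h2 : j ≤ m₀ - 1
      · rw [hcA' i h1, hcA' j h2] at heq
        exact (ne_of_lvl (hlA i (by omega)) (hlA j (by omega)) (by omega)) heq
      · rw [hcA' i h1, hcB' j (by omega)] at heq
        by_cases h3 : i = 2*m₀ - j
        · rcases Nat.eq_zero_or_pos i with h4 | h4
          · rw [h4, hA0] at heq
            have h5 : 2*m₀ - j = 0 := by omega
            rw [h5, hB0] at heq
            exact huv.ne heq
          · have heq2 : A i = B i := by rw [heq]; congr 1; omega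
            have hconf := conf_trunc_merge (G := G) (i := i) (by omega) hA0 hB0 hlA hlB hcA hcB heq2
            exact hmin i (by omega) (by omega) hconf
        · exact (ne_of_lvl (hlA i (by omega)) (hlB (2*m₀ - j) (by omega)) (by omega)) heq
      · omega
      · rw [hcB' i (by omega), hcB' j (by omega)] at heq
        exact (ne_of_lvl (hlB (2*m₀ - i) (by omega)) (hlB (2*m₀ - j) (by omega)) (by omega)) heq
    intro i j hi hj heq
    rcases lt_trichotomy i j with h | h | h
    · exact absurd heq (fun hq => key i j hi hj h hq)
    · exact h
    · exact absurd heq.symm (fun hq => key j i hj hi h hq)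
  · apply cord_symmetrize
    intro i j hi hj hij hadj
    by_contra hcon
    push_neg at hcon
    obtain ⟨hc1, hc2⟩ := hcon
    by_cases h1 : i ≤ m₀ - 1 <;> by_cases h2 : j ≤ m₀ - 1
    · rw [hcA' i h1, hcA' j h2] at hadj
      exact not_adj_of_lvl hG (hlA i (by omega)) (hlA j (by omega)) (by omega) hadj
    · rw [hcA' i h1, hcB' j (by omega)] at hadj
      have hrb : 2*m₀ - j ≤ m₀ := by omega
      rcases lt_trichotomy i (2*m₀ - j) with hir | hir | hir
      · by_cases hir2 : 2*m₀ - j = i + 1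
        · by_cases hr2 : 2*m₀ - j = m₀
          · omega
          · rw [hir2] at hadj
            have hconf := conf_cross (G := G) (i := i) (by omega) hB0 hA0 hlB hlA hcB hcA hadj.symm
            exact hmin (i+1) (by omega) (by omega) (claimConf_swap hconf)
        · exact not_adj_of_lvl hG (hlA i (by omega)) (hlB (2*m₀ - j) (by omega)) (by omega) hadj
      · rcases Nat.eq_zero_or_pos i with h4 | h4
        · omega
        · rw [← hir] at hadj
          have hconf := conf_trunc_rung (G := G) (i := i) (by omega) hA0 hB0 hlA hlB hcA hcB hadj
          exact hmin i (by omega) (by omega) hconf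
      · by_cases hir2 : i = 2*m₀ - j + 1
        · have hadj2 : G.Adj (A (2*m₀ - j + 1)) (B (2*m₀ - j)) := by rw [← hir2]; exact hadj
          have hconf := conf_cross (G := G) (i := 2*m₀ - j) (by omega) hA0 hB0 hlA hlB hcA hcB hadj2
          exact hmin (2*m₀ - j + 1) (by omega) (by omega) hconf
        · exact not_adj_of_lvl hG (hlA i (by omega)) (hlB (2*m₀ - j) (by omega)) (by omega) hadj
    · omega
    · rw [hcB' i (by omega), hcB' j (by omega)] at hadj
      exact not_adj_of_lvl hG (hlB (2*m₀ - i) (by omega)) (hlB (2*m₀ - j) (by omega)) (by omega) hadj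

lemma rung_cycle_contra (hG : G.Connected) (hch : KChordal G 4) {x u v : V} {n m₀ : ℕ}
    (hm₀ : 2 ≤ m₀) (huv : G.Adj u v)
    (hmin : ∀ i, 1 ≤ i → i < m₀ → ¬ ClaimConf G x u v n i)
    {A B : ℕ → V} (hA0 : A 0 = u) (hB0 : B 0 = v)
    (hlA : ∀ t, t ≤ m₀ → G.dist x (A t) + t = n) (hlB : ∀ t, t ≤ m₀ → G.dist x (B t) + t = n)
    (hcA : ∀ t, t < m₀ → G.Adj (A t) (A (t+1))) (hcB : ∀ t, t < m₀ → G.Adj (B t) (B (t+1)))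
    (hrung : G.Adj (A m₀) (B m₀)) : False := by
  have hminsw : ∀ i, 1 ≤ i → i < m₀ → ¬ ClaimConf G x v u n i :=
    fun i h1 h2 hcf => hmin i h1 h2 (claimConf_swap hcf)
  have hCA : ¬ G.Adj (A (m₀ - 1)) (B m₀) :=
    noCrossTop hG hch hm₀ huv hmin hA0 hB0 hlA hlB hcA hcB
  have hCB : ¬ G.Adj (B (m₀ - 1)) (A m₀) :=
    noCrossTop hG hch hm₀ huv.symm hminsw hB0 hA0 hlB hlA hcB hcA
  set m : ℕ := 2*m₀ + 2 with hm
  set c : ℕ → V := fun idx => if idx ≤ m₀ then A idx else B (2*m₀ + 1 - idx) with hc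
  have hcA' : ∀ idx, idx ≤ m₀ → c idx = A idx := by intro idx h; simp [hc, h]
  have hcB' : ∀ idx, m₀ < idx → c idx = B (2*m₀ + 1 - idx) := by
    intro idx h; simp [hc, show ¬ (idx ≤ m₀) by omega]
  apply no_big_cycle hch m (by omega) c
  · intro idx hidx
    rcases Nat.lt_or_ge idx m₀ with h1 | h1
    · rw [hcA' idx (by omega), hcA' (idx+1) (by omega)]
      exact hcA idx h1
    rcases Nat.eq_or_lt_of_le h1 with h2 | h2
    · have h2' : idx = m₀ := h2.symm
      rw [hcA' idx (by omega), hcB' (idx+1) (by omega)]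
      have heq2 : 2*m₀ + 1 - (idx + 1) = m₀ := by omega
      rw [heq2, h2']
      exact hrung
    · rw [hcB' idx (by omega), hcB' (idx+1) (by omega)]
      have h3 := hcB (2*m₀ + 1 - idx - 1) (by omega)
      have heq : 2*m₀ + 1 - idx - 1 + 1 = 2*m₀ + 1 - idx := by omega
      rw [heq] at h3
      have heq2 : 2*m₀ + 1 - (idx + 1) = 2*m₀ + 1 - idx - 1 := by omega
      rw [heq2]
      exact h3.symm
  · rw [hcB' (m-1) (by omega), hcA' 0 (by omega)]
    have : 2*m₀ + 1 - (m - 1) = 0 := by omega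
    rw [this, hA0, hB0]
    exact huv.symm
  · have key : ∀ i j, i < m → j < m → i < j → c i = c j → False := by
      intro i j hi hj hij heq
      by_cases h1 : i ≤ m₀ <;> by_cases h2 : j ≤ m₀
      · rw [hcA' i h1, hcA' j h2] at heq
        exact (ne_of_lvl (hlA i h1) (hlA j h2) (by omega)) heq
      · rw [hcA' i h1, hcB' j (by omega)] at heq
        by_cases h3 : i = 2*m₀ + 1 - j
        · rcases Nat.eq_zero_or_pos i with h4 | h4
          · rw [h4, hA0] at heq
            have h5 : 2*m₀ + 1 - j = 0 := by omega
            rw [h5, hB0] at heq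
            exact huv.ne heq
          · by_cases h6 : i = m₀
            · have heq2 : A m₀ = B m₀ := by rw [← h6, heq]; congr 1; omega
              exact hrung.ne heq2
            · have heq2 : A i = B i := by rw [heq]; congr 1; omega
              have hconf := conf_trunc_merge (G := G) (i := i) (by omega) hA0 hB0 hlA hlB hcA hcB heq2
              exact hmin i (by omega) (by omega) hconf
        · exact (ne_of_lvl (hlA i h1) (hlB (2*m₀ + 1 - j) (by omega)) (by omega)) heq
      · omega
      · rw [hcB' i (by omega), hcB' j (by omega)] at heq
        exact (ne_of_lvl (hlB (2*m₀ + 1 - i) (by omega)) (hlB (2*m₀ + 1 - j) (by omega)) (by omega)) heq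
    intro i j hi hj heq
    rcases lt_trichotomy i j with h | h | h
    · exact absurd heq (fun hq => key i j hi hj h hq)
    · exact h
    · exact absurd heq.symm (fun hq => key j i hj hi h hq)
  · apply cord_symmetrize
    intro i j hi hj hij hadj
    by_contra hcon
    push_neg at hcon
    obtain ⟨hc1, hc2⟩ := hcon
    by_cases h1 : i ≤ m₀ <;> by_cases h2 : j ≤ m₀
    · rw [hcA' i h1, hcA' j h2] at hadj
      exact not_adj_of_lvl hG (hlA i h1) (hlA j h2) (by omega) hadj
    · rw [hcA' i h1, hcB' j (by omega)] at hadj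
      have hrb : 2*m₀ + 1 - j ≤ m₀ := by omega
      rcases lt_trichotomy i (2*m₀ + 1 - j) with hir | hir | hir
      · -- i < r; only r = i+1 relevant
        by_cases hir2 : 2*m₀ + 1 - j = i + 1
        · rw [hir2] at hadj
          by_cases hr2 : i + 1 = m₀
          · -- A (m₀ - 1) ~ B m₀ : contradicts hCA
            apply hCA
            have e1 : m₀ - 1 = i := by omega
            rw [e1, ← hr2]
            exact hadj
          · have hconf := conf_cross (G := G) (i := i) (by omega) hB0 hA0 hlB hlA hcB hcA hadj.symm
            exact hmin (i+1) (by omega) (by omega) (claimConf_swap hconf)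
        · exact not_adj_of_lvl hG (hlA i h1) (hlB (2*m₀ + 1 - j) (by omega)) (by omega) hadj
      · -- i = r
        rcases Nat.eq_zero_or_pos i with h4 | h4
        · omega
        · by_cases h6 : i = m₀
          · omega
          · rw [← hir] at hadj
            have hconf := conf_trunc_rung (G := G) (i := i) (by omega) hA0 hB0 hlA hlB hcA hcB hadj
            exact hmin i (by omega) (by omega) hconf
      · -- i = r + 1 relevant
        by_cases hir2 : i = 2*m₀ + 1 - j + 1
        · by_cases h6 : i = m₀
          · -- A m₀ ~ B (m₀ - 1) : contradicts hCB
            apply hCB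
            rw [h6] at hadj
            have e1 : 2*m₀ + 1 - j = m₀ - 1 := by omega
            rw [e1] at hadj
            exact hadj.symm
          · have hadj2 : G.Adj (A (2*m₀ + 1 - j + 1)) (B (2*m₀ + 1 - j)) := by rw [← hir2]; exact hadj
            have hconf := conf_cross (G := G) (i := 2*m₀ + 1 - j) (by omega) hA0 hB0 hlA hlB hcA hcB hadj2
            exact hmin (2*m₀ + 1 - j + 1) (by omega) (by omega) hconf
        · exact not_adj_of_lvl hG (hlA i h1) (hlB (2*m₀ + 1 - j) (by omega)) (by omega) hadj
    · omega
    · rw [hcB' i (by omega), hcB' j (by omega)] at hadj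
      exact not_adj_of_lvl hG (hlB (2*m₀ + 1 - i) (by omega)) (hlB (2*m₀ + 1 - j) (by omega)) (by omega) hadj

lemma chains_of_geodesic (hG : G.Connected) {x u : V} {n : ℕ} (hu : G.dist x u = n) :
    ∃ A : ℕ → V, A 0 = u ∧ A n = x ∧ (∀ i, i < n → G.Adj (A i) (A (i+1))) ∧
      (∀ i, i ≤ n → G.dist x (A i) + i = n) := by
  have hux : G.dist u x = n := by rw [SimpleGraph.dist_comm]; exact hu
  obtain ⟨g, hg0, hgn, hgadj, hgd⟩ := exists_geodesic_fn hG u x n hux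
  refine ⟨g, hg0, hgn, hgadj, ?_⟩
  intro i hi
  have h1 := hgd i n hi (le_refl n)
  rw [hgn] at h1
  have h2 : G.dist x (g i) = G.dist (g i) x := SimpleGraph.dist_comm ..
  omega

lemma rung_of_no_apex (hG : G.Connected) (hch : KChordal G 4) {x u v : V} {n : ℕ}
    (hn : 2 ≤ n) (huv : G.Adj u v) (hu : G.dist x u = n) (hv : G.dist x v = n)
    (hnoapex : ∀ w, G.Adj u w → G.Adj v w → G.dist x w + 1 ≠ n) :
    ∃ a b, G.Adj u a ∧ G.Adj v b ∧ G.Adj a b ∧ G.dist x a + 1 = n ∧ G.dist x b + 1 = n ∧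
      ¬ G.Adj u b ∧ ¬ G.Adj v a := by
  obtain ⟨A0, hA00, hA0n, hA0adj, hA0lvl⟩ := chains_of_geodesic hG hu
  obtain ⟨B0, hB00, hB0n, hB0adj, hB0lvl⟩ := chains_of_geodesic hG hv
  have hP : ∃ m, 1 ≤ m ∧ ClaimConf G x u v n m := by
    refine ⟨n, by omega, A0, B0, hA00, hB00, hA0lvl, hB0lvl, hA0adj, hB0adj, Or.inl ?_⟩
    rw [hA0n, hB0n]
  classical
  have hspec := Nat.find_spec hP
  set m₀ := Nat.find hP with hm₀def
  obtain ⟨hm1, A, B, hA0, hB0, hlA, hlB, hcA, hcB, hend⟩ := hspec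
  have hmin : ∀ i, 1 ≤ i → i < m₀ → ¬ ClaimConf G x u v n i := by
    intro i h1 h2 hcf
    exact Nat.find_min hP h2 ⟨h1, hcf⟩
  have hm₀n : m₀ ≤ n := Nat.find_min' hP ⟨by omega, A0, B0, hA00, hB00, hA0lvl, hB0lvl, hA0adj, hB0adj, Or.inl (by rw [hA0n, hB0n])⟩
  rcases hend with hmrg | hrng
  · rcases Nat.eq_or_lt_of_le hm1 with h1 | h1
    · -- m₀ = 1 : common neighbor, contradiction
      exfalso
      have e1 : (1:ℕ) = m₀ := h1
      have hadjuA : G.Adj u (A 1) := by rw [← hA0]; exact hcA 0 (by omega)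
      have hadjvA : G.Adj v (A 1) := by
        rw [← hB0]
        have := hcB 0 (by omega)
        rw [← e1] at hmrg
        rw [hmrg]
        exact this
      exact hnoapex (A 1) hadjuA hadjvA (by have := hlA 1 (by omega); omega)
    · exact absurd hmrg (by
        intro hmg
        exact merge_cycle_contra hG hch (by omega) huv hmin hA0 hB0 hlA hlB hcA hcB hmg)
  · rcases Nat.eq_or_lt_of_le hm1 with h1 | h1
    · -- m₀ = 1 : found the rung
      have e1 : (1:ℕ) = m₀ := h1
      rw [← e1] at hrng
      have hadjuA : G.Adj u (A 1) := by rw [← hA0]; exact hcA 0 (by omega)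
      have hadjvB : G.Adj v (B 1) := by rw [← hB0]; exact hcB 0 (by omega)
      have hlA1 : G.dist x (A 1) + 1 = n := hlA 1 (by omega)
      have hlB1 : G.dist x (B 1) + 1 = n := hlB 1 (by omega)
      refine ⟨A 1, B 1, hadjuA, hadjvB, hrng, hlA1, hlB1, ?_, ?_⟩
      · intro hub
        exact hnoapex (B 1) hub hadjvB (by omega)
      · intro hva
        exact hnoapex (A 1) hadjuA hva (by omega)
    · exact absurd hrng (by
        intro hrg
        exact rung_cycle_contra hG hch (by omega) huv hmin hA0 hB0 hlA hlB hcA hcB hrg)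

lemma dist_zero_eq (hG : G.Connected) {a b : V} (h : G.dist a b = 0) : a = b :=
  (hG.dist_eq_zero_iff).1 h

/-- existence of some building -/
lemma bldg_exists (hG : G.Connected) (hch : KChordal G 4) (x : V) :
    ∀ n u v, G.Adj u v → G.dist x u = n → G.dist x v = n → Nonempty (Bldg G x u v n) := by
  intro n
  induction n using Nat.strong_induction_on with
  | _ n ih =>
    intro u v huv hu hv
    rcases Nat.eq_zero_or_pos n with rfl | hn
    · exfalso
      have h1 := dist_zero_eq hG hu
      have h2 := dist_zero_eq hG hv
      exact huv.ne (h1.symm.trans h2)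
    by_cases hap : ∃ w, G.Adj u w ∧ G.Adj v w ∧ G.dist x w + 1 = n
    · obtain ⟨w, hw1, hw2, hw3⟩ := hap
      refine ⟨⟨0, fun _ => u, fun _ => v, w, rfl, rfl,
        fun i hi => absurd hi (by omega), fun i hi => absurd hi (by omega),
        fun i _ => huv, hw1, hw2, ?_, ?_, ?_⟩⟩
      · intro i hi
        have h0 : i = 0 := by omega
        subst h0
        simpa using hu
      · intro i hi
        have h0 : i = 0 := by omega
        subst h0
        simpa using hv
      · simpa using hw3
    · push_neg at hap
      rcases Nat.lt_or_ge n 2 with hn2 | hn2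
      · -- n = 1 : x itself is an apex, contradiction
        exfalso
        have hn1 : n = 1 := by omega
        have hux : G.Adj u x := by
          rw [← SimpleGraph.dist_eq_one_iff_adj, SimpleGraph.dist_comm]
          omega
        have hvx : G.Adj v x := by
          rw [← SimpleGraph.dist_eq_one_iff_adj, SimpleGraph.dist_comm]
          omega
        refine hap x hux hvx ?_
        rw [SimpleGraph.dist_self]
        omega
      · obtain ⟨a, b, hua, hvb, hab, hla, hlb, _, _⟩ :=
          rung_of_no_apex hG hch hn2 huv hu hv hap
        obtain ⟨B⟩ := ih (n-1) (by omega) a b hab (by omega) (by omega)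
        exact ⟨B.prepend (by omega) u v hua hvb huv hu hv⟩

namespace Bldg

def tail {x u v : V} {n : ℕ} (B : Bldg G x u v n) (hk : 1 ≤ B.k) :
    Bldg G x (B.U 1) (B.Vv 1) (n-1) where
  k := B.k - 1
  U := fun i => B.U (i+1)
  Vv := fun i => B.Vv (i+1)
  w := B.w
  hU0 := rfl
  hV0 := rfl
  adjU := fun i hi => B.adjU (i+1) (by omega)
  adjV := fun i hi => B.adjV (i+1) (by omega)
  rung := fun i hi => B.rung (i+1) (by omega)
  apexU := by
    show G.Adj (B.U (B.k - 1 + 1)) B.w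
    have h : B.k - 1 + 1 = B.k := by omega
    rw [h]; exact B.apexU
  apexV := by
    show G.Adj (B.Vv (B.k - 1 + 1)) B.w
    have h : B.k - 1 + 1 = B.k := by omega
    rw [h]; exact B.apexV
  lvlU := fun i hi => by
    show G.dist x (B.U (i+1)) + i = n - 1
    have := B.lvlU (i+1) (by omega); have := B.lvlw; omega
  lvlV := fun i hi => by
    show G.dist x (B.Vv (i+1)) + i = n - 1
    have := B.lvlV (i+1) (by omega); have := B.lvlw; omega
  lvlw := by have := B.lvlw; omega

lemma tail_min {x u v : V} {n : ℕ} (B : Bldg G x u v n) (hk : 1 ≤ B.k)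
    (hmin : ∀ B' : Bldg G x u v n, B.k ≤ B'.k) :
    ∀ B' : Bldg G x (B.U 1) (B.Vv 1) (n-1), (B.tail hk).k ≤ B'.k := by
  intro B'
  have hn : 1 ≤ n := by have := B.lvlw; omega
  have ha1 : G.Adj u (B.U 1) := by
    have h := B.adjU 0 hk
    rw [B.hU0] at h
    exact h
  have ha2 : G.Adj v (B.Vv 1) := by
    have h := B.adjV 0 hk
    rw [B.hV0] at h
    exact h
  have ha3 : G.Adj u v := by
    have h := B.rung 0 (by omega)
    rw [B.hU0, B.hV0] at h
    exact h
  have ha4 : G.dist x u = n := by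
    have h := B.lvlU 0 (by omega)
    rw [B.hU0] at h
    omega
  have ha5 : G.dist x v = n := by
    have h := B.lvlV 0 (by omega)
    rw [B.hV0] at h
    omega
  have hn1 : 1 ≤ n := by omega
  let hB2 := B'.prepend (n := n) hn1 u v ha1 ha2 ha3 ha4 ha5
  have hle := hmin hB2
  have hk2 : hB2.k = B'.k + 1 := rfl
  show B.k - 1 ≤ B'.k
  omega

end Bldg

lemma core_descent (hG : G.Connected) (hch : KChordal G 4) {x u v : V} {n : ℕ}
    (B : Bldg G x u v n) (hmin : ∀ B' : Bldg G x u v n, B.k ≤ B'.k)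
    {j : ℕ} (hjk : j ≤ B.k) (hj2 : 2 ≤ j)
    (hjmin : ∀ r, 1 ≤ r → r < j → G.dist u (B.Vv r) = r + 1) :
    ∀ t s, s + (t+1) = j →
      ∀ c : ℕ → V, c 0 = u → (∀ r, r < s → G.Adj (c r) (c (r+1))) →
        (∀ r, r ≤ s → G.Adj (c r) (B.Vv r)) → (∀ r, r ≤ s → G.dist x (c r) + r = n) →
        G.dist (c s) (B.Vv j) = t + 1 → False := by
  intro t
  induction t with
  | zero =>
    intro s hsj c hc0 hchain hrng hclvl hd
    -- c s is adjacent to Vv j ; build a smaller building with apex Vv j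
    have hadj : G.Adj (c s) (B.Vv j) := SimpleGraph.dist_eq_one_iff_adj.1 hd
    have hapexV : G.Adj (B.Vv s) (B.Vv j) := by
      have h := B.adjV s (by omega)
      have e : s + 1 = j := by omega
      rw [e] at h
      exact h
    let hB' : Bldg G x u v n := {
      k := s, U := c, Vv := B.Vv, w := B.Vv j,
      hU0 := hc0, hV0 := B.hV0,
      adjU := hchain,
      adjV := fun r hr => B.adjV r (by omega),
      rung := hrng,
      apexU := hadj,
      apexV := hapexV,
      lvlU := hclvl,
      lvlV := fun r hr => B.lvlV r (by omega),
      lvlw := by have := B.lvlV j hjk; omega }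
    have := hmin hB'
    have hk' : hB'.k = s := rfl
    omega
  | succ t ih =>
    intro s hsj c hc0 hchain hrng hclvl hd
    obtain ⟨g, hg0, hgT, hgadj, hgd⟩ := exists_geodesic_fn hG (c s) (B.Vv j) (t+2) hd
    have hlcs : G.dist x (c s) + s = n := hclvl s (le_refl s)
    have hlvj : G.dist x (B.Vv j) + j = n := B.lvlV j hjk
    have hglvl : ∀ i, i ≤ t+2 → G.dist x (g i) + (s+i) = n := by
      intro i hi
      have e1 := hgd 0 i (by omega) hi
      have e2 := hgd i (t+2) hi (le_refl _)
      rw [hg0] at e1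
      rw [hgT] at e2
      have t1 : G.dist x (g i) ≤ G.dist x (B.Vv j) + G.dist (B.Vv j) (g i) := hG.dist_triangle
      have t2 : G.dist x (c s) ≤ G.dist x (g i) + G.dist (g i) (c s) := hG.dist_triangle
      have c1 : G.dist (B.Vv j) (g i) = G.dist (g i) (B.Vv j) := SimpleGraph.dist_comm ..
      have c2 : G.dist (g i) (c s) = G.dist (c s) (g i) := SimpleGraph.dist_comm ..
      omega
    have hgne : ∀ i i', i < i' → i' ≤ t+2 → g i ≠ g i' := by
      intro i i' hii hi' heq
      have := hgd i i' (by omega) hi'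
      rw [heq] at this
      rw [SimpleGraph.dist_self] at this
      omega
    have hgnadj : ∀ i i', i + 2 ≤ i' → i' ≤ t+2 → ¬ G.Adj (g i) (g i') := by
      intro i i' hii hi' hadj
      have h1 := hgd i i' (by omega) hi'
      have h2 := adj_dist_eq_one hadj
      omega
    have hdu : G.dist u (c s) ≤ s := by
      have := Bldg.chain_dist_le hG c s hchain 0 s (by omega) (le_refl s)
      rw [hc0] at this
      exact this
    have hdug : ∀ i, i ≤ t+2 → G.dist u (g i) ≤ s + i := by
      intro i hi
      have h1 := hgd 0 i (by omega) hi
      rw [hg0] at h1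
      have t1 : G.dist u (g i) ≤ G.dist u (c s) + G.dist (c s) (g i) := hG.dist_triangle
      omega
    -- a shortcut from u into the V-chain at depth < j contradicts minimality of j
    have hshort : ∀ r, 1 ≤ r → r < j → G.dist u (B.Vv r) ≤ r → False := by
      intro r h1 h2 h3
      have := hjmin r h1 h2
      omega
    -- an apex below the pair (c s, Vv s) contradicts minimality of the building
    have hapex : ∀ y, G.Adj (c s) y → G.Adj (B.Vv s) y → G.dist x y + (s+1) = n → False := by
      intro y hy1 hy2 hylvl
      let hB' : Bldg G x u v n := {
        k := s, U := c, Vv := B.Vv, w := y,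
        hU0 := hc0, hV0 := B.hV0,
        adjU := hchain,
        adjV := fun r hr => B.adjV r (by omega),
        rung := hrng,
        apexU := hy1, apexV := hy2,
        lvlU := hclvl,
        lvlV := fun r hr => B.lvlV r (by omega),
        lvlw := hylvl }
      have := hmin hB'
      have hk' : hB'.k = s := rfl
      omega
    by_cases hA : G.Adj (g 1) (B.Vv (s+1))
    · -- extend the chain by g 1 and recurse
      apply ih (s+1) (by omega) (fun r => if r ≤ s then c r else g 1) (by simp [hc0])
      · intro r hr
        rcases Nat.lt_or_ge r s with h1 | h1
        · simp only [show r ≤ s by omega, show r + 1 ≤ s by omega, if_true]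
          exact hchain r h1
        · have hrs : r = s := by omega
          simp only [show r ≤ s by omega, show ¬ (r + 1 ≤ s) by omega, if_true, if_false]
          have := hgadj 0 (by omega)
          rw [hg0] at this
          rw [hrs]
          exact this
      · intro r hr
        rcases Nat.lt_or_ge r (s+1) with h1 | h1
        · simp only [show r ≤ s by omega, if_true]
          exact hrng r (by omega)
        · have hrs : r = s + 1 := by omega
          simp only [show ¬ (r ≤ s) by omega, if_false]
          rw [hrs]
          exact hA
      · intro r hr
        rcases Nat.lt_or_ge r (s+1) with h1 | h1
        · simp only [show r ≤ s by omega, if_true]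
          exact hclvl r (by omega)
        · have hrs : r = s + 1 := by omega
          simp only [show ¬ (r ≤ s) by omega, if_false]
          rw [hrs]
          exact hglvl 1 (by omega)
      · simp only [show ¬ (s + 1 ≤ s) by omega, if_false]
        have := hgd 1 (t+2) (by omega) (le_refl _)
        rw [hgT] at this
        have e : t + 2 - 1 = t + 1 := by omega
        rw [e] at this
        exact this
    · -- no extension possible: chase chords
      -- unified cycle contradiction
      have cyc_contra : ∀ aa δ : ℕ, δ ≤ 1 → 2 ≤ aa → aa ≤ t+2 → s + aa ≤ j - 1 + δ →
          G.Adj (g aa) (B.Vv (s + aa - δ)) →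
          (∀ a', 1 ≤ a' → a' < aa →
            ¬ G.Adj (g a') (B.Vv (s+a'-1)) ∧ ¬ G.Adj (g a') (B.Vv (s+a'))) →
          (δ = 0 → ¬ G.Adj (g aa) (B.Vv (s + aa - 1))) → False := by
        intro aa δ hδ haa2 haat hrange hedge hNAb hp1
        set m : ℕ := 2*aa + 2 - δ with hm
        set cy : ℕ → V := fun idx => if idx ≤ aa then g idx else B.Vv (s + 2*aa + 1 - δ - idx)
          with hcy
        have hcyg : ∀ idx, idx ≤ aa → cy idx = g idx := by intro idx h; simp [hcy, h]
        have hcyV : ∀ idx, aa < idx → cy idx = B.Vv (s + 2*aa + 1 - δ - idx) := by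
          intro idx h; simp [hcy, show ¬ (idx ≤ aa) by omega]
        -- bounds for V-indices: for aa < idx ≤ m-1, s ≤ r ≤ s + aa - δ where r = s+2aa+1-δ-idx
        apply no_big_cycle hch m (by omega) cy
        · -- edges
          intro idx hidx
          rcases Nat.lt_or_ge idx aa with h1 | h1
          · rw [hcyg idx (by omega), hcyg (idx+1) (by omega)]
            exact hgadj idx (by omega)
          rcases Nat.eq_or_lt_of_le h1 with h2 | h2
          · have h2' : idx = aa := h2.symm
            rw [hcyg idx (by omega), hcyV (idx+1) (by omega)]
            have e : s + 2*aa + 1 - δ - (idx + 1) = s + aa - δ := by omega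
            rw [e, h2']
            exact hedge
          · rw [hcyV idx (by omega), hcyV (idx+1) (by omega)]
            have hrlow : s + 1 ≤ s + 2*aa + 1 - δ - idx := by omega
            have h3 := B.adjV (s + 2*aa + 1 - δ - idx - 1) (by omega)
            have e : s + 2*aa + 1 - δ - idx - 1 + 1 = s + 2*aa + 1 - δ - idx := by omega
            rw [e] at h3
            have e2 : s + 2*aa + 1 - δ - (idx+1) = s + 2*aa + 1 - δ - idx - 1 := by omega
            rw [e2]
            exact h3.symm
        · -- wrap
          rw [hcyV (m-1) (by omega), hcyg 0 (by omega)]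
          have e : s + 2*aa + 1 - δ - (m - 1) = s := by omega
          rw [e, hg0]
          exact (hrng s (le_refl s)).symm
        · -- injectivity
          have key : ∀ i1 i2, i1 < m → i2 < m → i1 < i2 → cy i1 = cy i2 → False := by
            intro i1 i2 h1 h2 h12 heq
            by_cases hi1 : i1 ≤ aa <;> by_cases hi2 : i2 ≤ aa
            · rw [hcyg i1 hi1, hcyg i2 hi2] at heq
              exact hgne i1 i2 h12 (by omega) heq
            · rw [hcyg i1 hi1, hcyV i2 (by omega)] at heq
              set r : ℕ := s + 2*aa + 1 - δ - i2 with hr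
              have hrs : s ≤ r ∧ r ≤ s + aa - δ := by constructor <;> omega
              by_cases hlv : s + i1 = r
              · rcases Nat.eq_zero_or_pos i1 with h0 | hpos
                · rw [h0, hg0] at heq
                  have : r = s := by omega
                  rw [this] at heq
                  exact (hrng s (le_refl s)).ne heq
                · have hds : G.dist (c s) (B.Vv r) = i1 := by
                    have h := hgd 0 i1 (by omega) (by omega)
                    rw [hg0, heq] at h
                    omega
                  have hdur : G.dist u (B.Vv r) ≤ r := by
                    have t1 : G.dist u (B.Vv r) ≤ G.dist u (c s) + G.dist (c s) (B.Vv r) :=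
                      hG.dist_triangle
                    omega
                  exact hshort r (by omega) (by omega) hdur
              · exact (ne_of_lvl (hglvl i1 (by omega)) (B.lvlV r (by omega)) (by omega)) heq
            · omega
            · rw [hcyV i1 (by omega), hcyV i2 (by omega)] at heq
              exact (ne_of_lvl (B.lvlV (s + 2*aa + 1 - δ - i1) (by omega))
                (B.lvlV (s + 2*aa + 1 - δ - i2) (by omega)) (by omega)) heq
          intro i1 i2 h1 h2 heq
          rcases lt_trichotomy i1 i2 with h | h | h
          · exact absurd heq (fun hq => key i1 i2 h1 h2 h hq)
          · exact h
          · exact absurd heq.symm (fun hq => key i2 i1 h2 h1 h hq)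
        · -- chords
          apply cord_symmetrize
          intro i1 i2 h1 h2 h12 hadj
          by_contra hcon
          push_neg at hcon
          obtain ⟨hcc1, hcc2⟩ := hcon
          by_cases hi1 : i1 ≤ aa <;> by_cases hi2 : i2 ≤ aa
          · rw [hcyg i1 hi1, hcyg i2 hi2] at hadj
            exact hgnadj i1 i2 (by omega) (by omega) hadj
          · rw [hcyg i1 hi1, hcyV i2 (by omega)] at hadj
            set r : ℕ := s + 2*aa + 1 - δ - i2 with hr
            have hrs : s ≤ r ∧ r ≤ s + aa - δ := by constructor <;> omega
            by_cases e1 : r = s + i1 + 1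
            · -- shortcut from u
              have hdur : G.dist u (B.Vv r) ≤ r := by
                have t1 : G.dist u (B.Vv r) ≤ G.dist u (g i1) + G.dist (g i1) (B.Vv r) :=
                  hG.dist_triangle
                have t2 := adj_dist_eq_one hadj
                have t3 := hdug i1 (by omega)
                omega
              exact hshort r (by omega) (by omega) hdur
            by_cases e2 : r = s + i1
            · -- same-level chord
              rcases Nat.eq_zero_or_pos i1 with h0 | hpos
              · -- wrap position, excluded
                omega
              · by_cases hia : i1 < aa
                · have := (hNAb i1 (by omega) hia).2
                  rw [← e2] at this
                  exact this hadj
                · -- i1 = aa : consecutive, excluded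
                  omega
            by_cases e3 : r + 1 = s + i1
            · rcases Nat.lt_or_ge i1 aa with hia | hia
              · have := (hNAb i1 (by omega) hia).1
                have e4 : s + i1 - 1 = r := by omega
                rw [e4] at this
                exact this hadj
              · -- i1 = aa
                have hiaa : i1 = aa := by omega
                rcases Nat.eq_zero_or_pos δ with hδ0 | hδ1
                · have := hp1 hδ0
                  have e4 : s + aa - 1 = r := by omega
                  rw [e4] at this
                  rw [hiaa] at hadj
                  exact this hadj
                · -- δ = 1 : consecutive (aa, aa+1), excluded
                  omega
            · exact not_adj_of_lvl hG (hglvl i1 (by omega)) (B.lvlV r (by omega)) (by omega) hadj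
          · omega
          · rw [hcyV i1 (by omega), hcyV i2 (by omega)] at hadj
            exact not_adj_of_lvl hG (B.lvlV (s + 2*aa + 1 - δ - i1) (by omega))
              (B.lvlV (s + 2*aa + 1 - δ - i2) (by omega)) (by omega) hadj
      -- no adjacency from the geodesic into the V-chain
      have NA : ∀ a, 1 ≤ a → a ≤ t+1 →
          ¬ G.Adj (g a) (B.Vv (s+a-1)) ∧ ¬ G.Adj (g a) (B.Vv (s+a)) := by
        intro a
        induction a using Nat.strong_induction_on with
        | _ a iha =>
          intro ha1 ha2
          have part1 : ¬ G.Adj (g a) (B.Vv (s+a-1)) := by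
            rcases Nat.eq_or_lt_of_le ha1 with e | hlt
            · -- a = 1
              intro hadj
              have e' : a = 1 := e.symm
              rw [e'] at hadj
              have e2 : s + 1 - 1 = s := by omega
              rw [e2] at hadj
              have hg1 : G.Adj (c s) (g 1) := by
                have := hgadj 0 (by omega)
                rw [hg0] at this
                exact this
              exact hapex (g 1) hg1 hadj.symm (hglvl 1 (by omega))
            · intro hadj
              exact cyc_contra a 1 (by omega) (by omega) (by omega) (by omega)
                hadj
                (fun a' h1 h2 => iha a' (by omega) h1 (by omega))
                (by omega)
          have part2 : ¬ G.Adj (g a) (B.Vv (s+a)) := by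
            rcases Nat.eq_or_lt_of_le ha1 with e | hlt
            · have e' : a = 1 := e.symm
              rw [e']
              exact hA
            · intro hadj
              exact cyc_contra a 0 (by omega) (by omega) (by omega) (by omega)
                (by simpa using hadj)
                (fun a' h1 h2 => iha a' (by omega) h1 (by omega))
                (fun _ => part1)
          exact ⟨part1, part2⟩
      -- final contradiction with the big cycle
      apply cyc_contra (t+2) 1 (by omega) (by omega) (by omega) (by omega)
      · have e : s + (t+2) - 1 = j - 1 := by omega
        rw [e]
        have h3 := B.adjV (j-1) (by omega)
        have e2 : j - 1 + 1 = j := by omega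
        rw [e2] at h3
        rw [hgT]
        exact h3.symm
      · intro a' h1 h2
        exact NA a' h1 (by omega)
      · omega

lemma uside_dist (hG : G.Connected) (hch : KChordal G 4) {x u v : V} {n : ℕ}
    (B : Bldg G x u v n) (hmin : ∀ B' : Bldg G x u v n, B.k ≤ B'.k) :
    ∀ jj, jj ≤ B.k → G.dist u (B.Vv jj) = jj + 1 := by
  by_contra hcon
  push_neg at hcon
  have hQ : ∃ jj, jj ≤ B.k ∧ G.dist u (B.Vv jj) ≠ jj + 1 := by
    obtain ⟨jj, h1, h2⟩ := hcon
    exact ⟨jj, h1, h2⟩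
  classical
  have hspec := Nat.find_spec hQ
  set j₀ := Nat.find hQ with hj₀def
  obtain ⟨hj₀k, hj₀ne⟩ := hspec
  have hU0 := B.hU0
  have hV0 := B.hV0
  have hruv : G.Adj u v := by
    have h := B.rung 0 (by omega)
    rw [hU0, hV0] at h
    exact h
  have hle : G.dist u (B.Vv j₀) ≤ j₀ + 1 := by
    have h := B.distUV_le hG 0 j₀ (by omega) hj₀k
    rw [hU0] at h
    have e1 : max 0 j₀ = j₀ := by omega
    have e2 : min 0 j₀ = 0 := by omega
    rw [e1, e2] at h
    simpa using h
  have hge : j₀ ≤ G.dist u (B.Vv j₀) := by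
    have h := B.distUV_ge hG 0 j₀ (by omega) hj₀k
    rw [hU0] at h
    have e1 : max 0 j₀ = j₀ := by omega
    have e2 : min 0 j₀ = 0 := by omega
    rw [e1, e2] at h
    simpa using h
  have hdeq : G.dist u (B.Vv j₀) = j₀ := by omega
  have hj₀1 : 1 ≤ j₀ := by
    rcases Nat.eq_zero_or_pos j₀ with h0 | h1
    · exfalso
      rw [h0, hV0] at hdeq
      have := adj_dist_eq_one hruv
      omega
    · exact h1
  rcases Nat.eq_or_lt_of_le hj₀1 with h1 | h1
  · -- j₀ = 1 : u is adjacent to Vv 1 : small building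
    have hj1 : j₀ = 1 := h1.symm
    rw [hj1] at hdeq
    have hadj : G.Adj u (B.Vv 1) := SimpleGraph.dist_eq_one_iff_adj.1 hdeq
    have hadjv : G.Adj v (B.Vv 1) := by
      have h := B.adjV 0 (by omega)
      rw [hV0] at h
      exact h
    let hB' : Bldg G x u v n := {
      k := 0, U := fun _ => u, Vv := fun _ => v, w := B.Vv 1,
      hU0 := rfl, hV0 := rfl,
      adjU := fun r hr => absurd hr (by omega),
      adjV := fun r hr => absurd hr (by omega),
      rung := fun r _ => hruv,
      apexU := hadj, apexV := hadjv,
      lvlU := fun r hr => by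
        have h0 : r = 0 := by omega
        subst h0
        have := B.lvlU 0 (by omega)
        rw [hU0] at this
        simpa using this,
      lvlV := fun r hr => by
        have h0 : r = 0 := by omega
        subst h0
        have := B.lvlV 0 (by omega)
        rw [hV0] at this
        simpa using this,
      lvlw := by have := B.lvlV 1 (by omega); omega }
    have := hmin hB'
    have hk' : hB'.k = 0 := rfl
    omega
  · -- j₀ ≥ 2 : apply the descent machinery
    have hjmin : ∀ r, 1 ≤ r → r < j₀ → G.dist u (B.Vv r) = r + 1 := by
      intro r hr1 hr2
      by_contra hne
      exact Nat.find_min hQ hr2 ⟨by omega, hne⟩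
    apply core_descent hG hch B hmin hj₀k (by omega) hjmin (j₀ - 1) 0 (by omega)
      (fun _ => u) rfl (fun r hr => absurd hr (by omega))
    · intro r hr
      have h0 : r = 0 := by omega
      subst h0
      show G.Adj u (B.Vv 0)
      rw [hV0]
      exact hruv
    · intro r hr
      have h0 : r = 0 := by omega
      subst h0
      have := B.lvlU 0 (by omega)
      rw [hU0] at this
      simpa using this
    · have e : j₀ - 1 + 1 = j₀ := by omega
      rw [e]
      exact hdeq

lemma min_bldg_distUV (hG : G.Connected) (hch : KChordal G 4) :
    ∀ K : ℕ, ∀ {x u v : V} {n : ℕ} (B : Bldg G x u v n), B.k = K →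
    (∀ B' : Bldg G x u v n, B.k ≤ B'.k) →
    ∀ i jj, i ≤ B.k → jj ≤ B.k →
      G.dist (B.U i) (B.Vv jj) = (max i jj - min i jj) + 1 := by
  intro K
  induction K using Nat.strong_induction_on with
  | _ K ihK =>
    intro x u v n B hK hmin i jj hi hjj
    rcases Nat.eq_zero_or_pos i with hi0 | hi1
    · subst hi0
      have h := uside_dist hG hch B hmin jj hjj
      rw [B.hU0]
      have e1 : max 0 jj = jj := by omega
      have e2 : min 0 jj = 0 := by omega
      rw [e1, e2]
      simpa using h
    rcases Nat.eq_zero_or_pos jj with hj0 | hj1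
    · subst hj0
      have hminsymm : ∀ B' : Bldg G x v u n, B.symm.k ≤ B'.k := by
        intro B'
        have h := hmin B'.symm
        have e1 : B.symm.k = B.k := rfl
        have e2 : B'.symm.k = B'.k := rfl
        omega
      have h := uside_dist hG hch B.symm hminsymm i hi
      have e3 : B.symm.Vv i = B.U i := rfl
      rw [e3] at h
      rw [B.hV0] at *
      rw [SimpleGraph.dist_comm]
      have e1 : max i 0 = i := by omega
      have e2 : min i 0 = 0 := by omega
      rw [e1, e2]
      simpa using h
    · -- both at least 1 : pass to the tail
      have hk1 : 1 ≤ B.k := by omega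
      have h := ihK (K-1) (by omega) (B.tail hk1) (by show B.k - 1 = K - 1; omega)
        (B.tail_min hk1 hmin) (i-1) (jj-1)
        (by show i - 1 ≤ B.k - 1; omega) (by show jj - 1 ≤ B.k - 1; omega)
      have e1 : (B.tail hk1).U (i-1) = B.U (i-1+1) := rfl
      have e2 : (B.tail hk1).Vv (jj-1) = B.Vv (jj-1+1) := rfl
      rw [e1, e2] at h
      have e3 : i - 1 + 1 = i := by omega
      have e4 : jj - 1 + 1 = jj := by omega
      rw [e3, e4] at h
      have e5 : max (i-1) (jj-1) - min (i-1) (jj-1) = max i jj - min i jj := by omega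
      rw [e5] at h
      exact h

lemma dist_le_of_walk_map {W : Type} {H : SimpleGraph W} (hG : G.Connected) (f : W → V)
    (hom : ∀ a b, H.Adj a b → G.Adj (f a) (f b)) :
    ∀ {p q : W} (wk : H.Walk p q), G.dist (f p) (f q) ≤ wk.length := by
  intro p q wk
  induction wk with
  | nil => simp [SimpleGraph.dist_self]
  | @cons a b c h w ih =>
    have t1 : G.dist (f a) (f c) ≤ G.dist (f a) (f b) + G.dist (f b) (f c) := hG.dist_triangle
    have t2 := adj_dist_eq_one (hom a b h)
    have t3 : (SimpleGraph.Walk.cons h w).length = w.length + 1 := by simp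
    omega


/-- In a finite connected 4-chordal graph, if the edge `uv` is equidistant from a vertex
`x`, then `G` contains an isometric building `B(w|uv)` whose outermost edge is `uv` and
whose apex `w` lies in `I(x,u) ∩ I(x,v)`. -/
theorem exists_isometric_building {V : Type} [Fintype V] (G : SimpleGraph V)
    (hG : G.Connected) (hchord : KChordal G 4) (x u v : V) (huv : G.Adj u v)
    (heq : G.dist u x = G.dist v x) :
    ∃ (k : ℕ) (f : Option (Fin (k + 1) ⊕ Fin (k + 1)) → V),
      IsIsometricCopy (buildingGraph k) G f ∧
      f (some (Sum.inl 0)) = u ∧ f (some (Sum.inr 0)) = v ∧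
      f none ∈ interval G x u ∩ interval G x v := by
  classical
  set n := G.dist x u with hn
  have hxu : G.dist x u = n := rfl
  have hxv : G.dist x v = n := by
    rw [SimpleGraph.dist_comm, ← heq, SimpleGraph.dist_comm]
  obtain ⟨B₀⟩ := bldg_exists hG hchord x n u v huv hxu hxv
  have hPk : ∃ kk, ∃ B : Bldg G x u v n, B.k = kk := ⟨B₀.k, B₀, rfl⟩
  obtain ⟨B, hBk⟩ := Nat.find_spec hPk
  have hmin : ∀ B' : Bldg G x u v n, B.k ≤ B'.k := by
    intro B'
    have h2 := Nat.find_min' hPk ⟨B', rfl⟩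
    omega
  -- G-side exact distances
  have hUVd := min_bldg_distUV hG hchord B.k B rfl hmin
  have gUU : ∀ i j, i ≤ B.k → j ≤ B.k → G.dist (B.U i) (B.U j) = max i j - min i j := by
    intro i j hi hj
    rcases le_total i j with h | h
    · have := B.distUU hG i j h hj; omega
    · have := B.distUU hG j i h hi
      rw [SimpleGraph.dist_comm]
      omega
  have gVV : ∀ i j, i ≤ B.k → j ≤ B.k → G.dist (B.Vv i) (B.Vv j) = max i j - min i j := by
    intro i j hi hj
    rcases le_total i j with h | h
    · have := B.distVV hG i j h hj; omega
    · have := B.distVV hG j i h hi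
      rw [SimpleGraph.dist_comm]
      omega
  have gUW : ∀ i, i ≤ B.k → G.dist (B.U i) B.w = B.k + 1 - i := B.distUW hG
  have gVW : ∀ i, i ≤ B.k → G.dist (B.Vv i) B.w = B.k + 1 - i := B.distVW hG
  have gVU : ∀ i j, i ≤ B.k → j ≤ B.k →
      G.dist (B.Vv i) (B.U j) = max i j - min i j + 1 := by
    intro i j hi hj
    rw [SimpleGraph.dist_comm]
    have := hUVd j i hj hi
    omega
  -- the map
  set k := B.k with hkdef
  set f : Option (Fin (k + 1) ⊕ Fin (k + 1)) → V := fun p =>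
    match p with
    | none => B.w
    | some (Sum.inl i) => B.U i.val
    | some (Sum.inr i) => B.Vv i.val
    with hfdef
  have hf1 : ∀ i, f (some (Sum.inl i)) = B.U i.val := fun _ => rfl
  have hf2 : ∀ i, f (some (Sum.inr i)) = B.Vv i.val := fun _ => rfl
  have hf3 : f none = B.w := rfl
  -- the building graph machinery
  set bg := buildingGraph k with hbgdef
  set fU : ℕ → Option (Fin (k + 1) ⊕ Fin (k + 1)) :=
    fun i => some (Sum.inl ⟨i % (k+1), Nat.mod_lt _ (Nat.succ_pos k)⟩) with hfU
  set fV : ℕ → Option (Fin (k + 1) ⊕ Fin (k + 1)) :=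
    fun i => some (Sum.inr ⟨i % (k+1), Nat.mod_lt _ (Nat.succ_pos k)⟩) with hfV
  have fUeq : ∀ i : Fin (k+1), fU i.val = some (Sum.inl i) := by
    intro i
    simp only [hfU]
    congr 1
    apply congrArg
    exact Fin.ext (Nat.mod_eq_of_lt i.isLt)
  have fVeq : ∀ i : Fin (k+1), fV i.val = some (Sum.inr i) := by
    intro i
    simp only [hfV]
    congr 1
    apply congrArg
    exact Fin.ext (Nat.mod_eq_of_lt i.isLt)
  have adjU : ∀ i, i < k → bg.Adj (fU i) (fU (i+1)) := by
    intro i h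
    rw [hbgdef, buildingGraph, SimpleGraph.fromRel_adj]
    constructor
    · intro hc
      have := congrArg (fun z => match z with | some (Sum.inl m) => (m:ℕ) | _ => 0) hc
      simp [hfU] at this
      rw [Nat.mod_eq_of_lt (by omega), Nat.mod_eq_of_lt (by omega)] at this
      omega
    · left
      show ((i+1) % (k+1) : ℕ) = (i % (k+1) : ℕ) + 1
      rw [Nat.mod_eq_of_lt (by omega), Nat.mod_eq_of_lt (by omega)]
  have adjV : ∀ i, i < k → bg.Adj (fV i) (fV (i+1)) := by
    intro i h
    rw [hbgdef, buildingGraph, SimpleGraph.fromRel_adj]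
    constructor
    · intro hc
      have := congrArg (fun z => match z with | some (Sum.inr m) => (m:ℕ) | _ => 0) hc
      simp [hfV] at this
      rw [Nat.mod_eq_of_lt (by omega), Nat.mod_eq_of_lt (by omega)] at this
      omega
    · left
      show ((i+1) % (k+1) : ℕ) = (i % (k+1) : ℕ) + 1
      rw [Nat.mod_eq_of_lt (by omega), Nat.mod_eq_of_lt (by omega)]
  have adjR : ∀ i, i ≤ k → bg.Adj (fU i) (fV i) := by
    intro i h
    rw [hbgdef, buildingGraph, SimpleGraph.fromRel_adj]
    refine ⟨by simp [hfU, hfV], Or.inl rfl⟩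
  have adjWU : bg.Adj (fU k) none := by
    rw [hbgdef, buildingGraph, SimpleGraph.fromRel_adj]
    refine ⟨by simp [hfU], Or.inl ?_⟩
    show (k % (k+1) : ℕ) = k
    exact Nat.mod_eq_of_lt (by omega)
  have adjWV : bg.Adj (fV k) none := by
    rw [hbgdef, buildingGraph, SimpleGraph.fromRel_adj]
    refine ⟨by simp [hfV], Or.inl ?_⟩
    show (k % (k+1) : ℕ) = k
    exact Nat.mod_eq_of_lt (by omega)
  -- walks along the chains
  have pU : ∀ a b, a ≤ b → b ≤ k → ∃ w : bg.Walk (fU a) (fU b), w.length = b - a := by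
    intro a b hab hbk
    have hadj' : ∀ r, r < b - a → bg.Adj (fU (a+r)) (fU (a+r+1)) :=
      fun r hr => adjU (a+r) (by omega)
    refine ⟨(pathAux (G := bg) (fun r => fU (a + r)) (b - a) hadj').copy rfl
      (by rw [show a + (b - a) = b by omega]), ?_⟩
    rw [SimpleGraph.Walk.length_copy, pathAux_length]
  have pV : ∀ a b, a ≤ b → b ≤ k → ∃ w : bg.Walk (fV a) (fV b), w.length = b - a := by
    intro a b hab hbk
    have hadj' : ∀ r, r < b - a → bg.Adj (fV (a+r)) (fV (a+r+1)) :=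
      fun r hr => adjV (a+r) (by omega)
    refine ⟨(pathAux (G := bg) (fun r => fV (a + r)) (b - a) hadj').copy rfl
      (by rw [show a + (b - a) = b by omega]), ?_⟩
    rw [SimpleGraph.Walk.length_copy, pathAux_length]
  have dUU : ∀ a b, a ≤ b → b ≤ k → bg.dist (fU a) (fU b) ≤ b - a := by
    intro a b hab hbk
    obtain ⟨w, hw⟩ := pU a b hab hbk
    have := SimpleGraph.dist_le w
    omega
  have dVV : ∀ a b, a ≤ b → b ≤ k → bg.dist (fV a) (fV b) ≤ b - a := by
    intro a b hab hbk
    obtain ⟨w, hw⟩ := pV a b hab hbk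
    have := SimpleGraph.dist_le w
    omega
  -- connectivity of the building graph
  have reach0 : ∀ p, bg.Reachable (fU 0) p := by
    intro p
    rcases p with _ | (i | i)
    · obtain ⟨w, _⟩ := pU 0 k (by omega) (le_refl k)
      exact ⟨w.concat adjWU⟩
    · obtain ⟨w, _⟩ := pU 0 i.val (by omega) (by omega)
      rw [fUeq] at w
      exact ⟨w⟩
    · obtain ⟨w, _⟩ := pV 0 i.val (by omega) (by omega)
      rw [fVeq] at w
      exact ⟨(SimpleGraph.Walk.cons (adjR 0 (by omega)) w)⟩
  have bgconn : bg.Connected := ⟨fun p q => (reach0 p).symm.trans (reach0 q)⟩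
  -- homomorphism property
  have homf : ∀ a b, bg.Adj a b → G.Adj (f a) (f b) := by
    intro a b hab
    rw [hbgdef, buildingGraph, SimpleGraph.fromRel_adj] at hab
    rcases a with _ | (i | i) <;> rcases b with _ | (j | j) <;>
      obtain ⟨hne, h | h⟩ := hab
    · exact absurd rfl hne
    · exact absurd rfl hne
    · exact (h : False).elim
    · have h' : (j : ℕ) = k := h
      rw [hf3, hf1]
      have e : j.val = k := h'
      rw [e]
      exact B.apexU.symm
    · exact (h : False).elim
    · have h' : (j : ℕ) = k := h
      rw [hf3, hf2]
      have e : j.val = k := h'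
      rw [e]
      exact B.apexV.symm
    · have h' : (i : ℕ) = k := h
      rw [hf1, hf3, h']
      exact B.apexU
    · exact (h : False).elim
    · have h' : (j : ℕ) = (i : ℕ) + 1 := h
      rw [hf1, hf1, h']
      exact B.adjU i.val (by omega)
    · have h' : (i : ℕ) = (j : ℕ) + 1 := h
      rw [hf1, hf1, h']
      exact (B.adjU j.val (by omega)).symm
    · have h' : i = j := h
      rw [hf1, hf2, h']
      exact B.rung j.val (by omega)
    · exact (h : False).elim
    · have h' : (i : ℕ) = k := h
      rw [hf2, hf3, h']
      exact B.apexV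
    · exact (h : False).elim
    · exact (h : False).elim
    · have h' : j = i := h
      rw [hf2, hf1, h']
      exact (B.rung i.val (by omega)).symm
    · have h' : (j : ℕ) = (i : ℕ) + 1 := h
      rw [hf2, hf2, h']
      exact B.adjV i.val (by omega)
    · have h' : (i : ℕ) = (j : ℕ) + 1 := h
      rw [hf2, hf2, h']
      exact (B.adjV j.val (by omega)).symm
  have hGle : ∀ a b, G.dist (f a) (f b) ≤ bg.dist a b := by
    intro a b
    obtain ⟨w, hw⟩ := bgconn.exists_walk_length_eq_dist a b
    have := dist_le_of_walk_map hG f homf w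
    omega
  refine ⟨B.k, f, ⟨?_, ?_, ?_⟩, ?_, ?_, ?_, ?_⟩
  · -- injectivity
    intro a b heqf
    rcases a with _ | (i | i) <;> rcases b with _ | (j | j)
    · rfl
    · exfalso
      rw [hf3, hf1] at heqf
      exact (ne_of_lvl B.lvlw (B.lvlU j.val (by omega)) (by omega)) heqf
    · exfalso
      rw [hf3, hf2] at heqf
      exact (ne_of_lvl B.lvlw (B.lvlV j.val (by omega)) (by omega)) heqf
    · exfalso
      rw [hf1, hf3] at heqf
      exact (ne_of_lvl (B.lvlU i.val (by omega)) B.lvlw (by omega)) heqf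
    · rw [hf1, hf1] at heqf
      have : i.val = j.val := by
        by_contra hne
        exact (ne_of_lvl (B.lvlU i.val (by omega)) (B.lvlU j.val (by omega)) (by omega)) heqf
      rw [Fin.ext this]
    · exfalso
      rw [hf1, hf2] at heqf
      by_cases hij : i.val = j.val
      · rw [hij] at heqf
        exact (B.rung j.val (by omega)).ne heqf
      · exact (ne_of_lvl (B.lvlU i.val (by omega)) (B.lvlV j.val (by omega)) (by omega)) heqf
    · exfalso
      rw [hf2, hf3] at heqf
      exact (ne_of_lvl (B.lvlV i.val (by omega)) B.lvlw (by omega)) heqf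
    · exfalso
      rw [hf2, hf1] at heqf
      by_cases hij : i.val = j.val
      · rw [hij] at heqf
        exact (B.rung j.val (by omega)).ne heqf.symm
      · exact (ne_of_lvl (B.lvlV i.val (by omega)) (B.lvlU j.val (by omega)) (by omega)) heqf
    · rw [hf2, hf2] at heqf
      have : i.val = j.val := by
        by_contra hne
        exact (ne_of_lvl (B.lvlV i.val (by omega)) (B.lvlV j.val (by omega)) (by omega)) heqf
      rw [Fin.ext this]
  · -- homomorphism
    exact homf
  · -- distances
    have hupUV : ∀ (i j : Fin (k+1)),
        bg.dist (some (Sum.inl i)) (some (Sum.inr j)) ≤ max i.val j.val - min i.val j.val + 1 := by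
      intro i j
      rw [← fUeq i, ← fVeq j]
      rcases le_total i.val j.val with h | h
      · have t1 : bg.dist (fU i.val) (fV j.val) ≤
            bg.dist (fU i.val) (fU j.val) + bg.dist (fU j.val) (fV j.val) := bgconn.dist_triangle
        have t2 := dUU i.val j.val h (by omega)
        have t3 := adj_dist_eq_one (adjR j.val (by omega))
        omega
      · have t1 : bg.dist (fU i.val) (fV j.val) ≤
            bg.dist (fU i.val) (fV i.val) + bg.dist (fV i.val) (fV j.val) := bgconn.dist_triangle
        have t2 : bg.dist (fV i.val) (fV j.val) ≤ i.val - j.val := by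
          rw [SimpleGraph.dist_comm]
          exact dVV j.val i.val h (by omega)
        have t3 := adj_dist_eq_one (adjR i.val (by omega))
        omega
    have hupUW : ∀ (i : Fin (k+1)),
        bg.dist (some (Sum.inl i)) none ≤ k + 1 - i.val := by
      intro i
      rw [← fUeq i]
      have t1 : bg.dist (fU i.val) none ≤
          bg.dist (fU i.val) (fU k) + bg.dist (fU k) none := bgconn.dist_triangle
      have t2 := dUU i.val k (by omega) (le_refl k)
      have t3 := adj_dist_eq_one adjWU
      omega
    have hupVW : ∀ (i : Fin (k+1)),
        bg.dist (some (Sum.inr i)) none ≤ k + 1 - i.val := by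
      intro i
      rw [← fVeq i]
      have t1 : bg.dist (fV i.val) none ≤
          bg.dist (fV i.val) (fV k) + bg.dist (fV k) none := bgconn.dist_triangle
      have t2 := dVV i.val k (by omega) (le_refl k)
      have t3 := adj_dist_eq_one adjWV
      omega
    have hupUU : ∀ (i j : Fin (k+1)),
        bg.dist (some (Sum.inl i)) (some (Sum.inl j)) ≤ max i.val j.val - min i.val j.val := by
      intro i j
      rw [← fUeq i, ← fUeq j]
      rcases le_total i.val j.val with h | h
      · have := dUU i.val j.val h (by omega); omega
      · have := dUU j.val i.val h (by omega)
        rw [SimpleGraph.dist_comm]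
        omega
    have hupVV : ∀ (i j : Fin (k+1)),
        bg.dist (some (Sum.inr i)) (some (Sum.inr j)) ≤ max i.val j.val - min i.val j.val := by
      intro i j
      rw [← fVeq i, ← fVeq j]
      rcases le_total i.val j.val with h | h
      · have := dVV i.val j.val h (by omega); omega
      · have := dVV j.val i.val h (by omega)
        rw [SimpleGraph.dist_comm]
        omega
    intro a b
    have hle := hGle a b
    rcases a with _ | (i | i) <;> rcases b with _ | (j | j)
    · rw [hf3, SimpleGraph.dist_self, SimpleGraph.dist_self]
    · -- w, U j
      rw [hf3, hf1] at hle ⊢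
      have hx1 : G.dist B.w (B.U j.val) = k + 1 - j.val := by
        rw [SimpleGraph.dist_comm]; exact gUW j.val (by omega)
      have hx2 : bg.dist none (some (Sum.inl j)) ≤ k + 1 - j.val := by
        rw [SimpleGraph.dist_comm]; exact hupUW j
      refine le_antisymm hle ?_
      rw [hx1]; exact hx2
    · rw [hf3, hf2] at hle ⊢
      have hx1 : G.dist B.w (B.Vv j.val) = k + 1 - j.val := by
        rw [SimpleGraph.dist_comm]; exact gVW j.val (by omega)
      have hx2 : bg.dist none (some (Sum.inr j)) ≤ k + 1 - j.val := by
        rw [SimpleGraph.dist_comm]; exact hupVW j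
      refine le_antisymm hle ?_
      rw [hx1]; exact hx2
    · rw [hf1, hf3] at hle ⊢
      have hx1 := gUW i.val (show i.val ≤ k by omega)
      have hx2 := hupUW i
      refine le_antisymm hle ?_
      rw [hx1]; exact hx2
    · rw [hf1, hf1] at hle ⊢
      have hx1 := gUU i.val j.val (by omega) (by omega)
      have hx2 := hupUU i j
      refine le_antisymm hle ?_
      rw [hx1]; exact hx2
    · rw [hf1, hf2] at hle ⊢
      have hx1 := hUVd i.val j.val (by omega) (by omega)
      have hx2 := hupUV i j
      refine le_antisymm hle ?_
      rw [hx1]; exact hx2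
    · rw [hf2, hf3] at hle ⊢
      have hx1 := gVW i.val (show i.val ≤ k by omega)
      have hx2 := hupVW i
      refine le_antisymm hle ?_
      rw [hx1]; exact hx2
    · rw [hf2, hf1] at hle ⊢
      have hx1 := gVU i.val j.val (by omega) (by omega)
      have hx2 : bg.dist (some (Sum.inr i)) (some (Sum.inl j)) ≤
          max i.val j.val - min i.val j.val + 1 := by
        rw [SimpleGraph.dist_comm]
        have := hupUV j i
        omega
      refine le_antisymm hle ?_
      rw [hx1]; exact hx2
    · rw [hf2, hf2] at hle ⊢
      have hx1 := gVV i.val j.val (by omega) (by omega)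
      have hx2 := hupVV i j
      refine le_antisymm hle ?_
      rw [hx1]; exact hx2
  · rw [hf1]
    simpa using B.hU0
  · rw [hf2]
    simpa using B.hV0
  · -- interval membership for u
    rw [hf3]
    show G.dist x B.w + G.dist B.w u = G.dist x u
    have h1 := B.lvlw
    have h2 : G.dist B.w u = k + 1 := by
      rw [SimpleGraph.dist_comm]
      have := gUW 0 (by omega)
      rw [B.hU0] at this
      omega
    have h3 := B.lvlU 0 (by omega)
    rw [B.hU0] at h3
    omega
  · rw [hf3]
    show G.dist x B.w + G.dist B.w v = G.dist x v
    have h1 := B.lvlw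
    have h2 : G.dist B.w v = k + 1 := by
      rw [SimpleGraph.dist_comm]
      have := gVW 0 (by omega)
      rw [B.hV0] at this
      omega
    have h3 := B.lvlV 0 (by omega)
    rw [B.hV0] at h3
    omega
end

section
/- For every integer k ≥ 1, there exists a finite connected simple graph G with Δ̂(G) = 8k and sl(G) = 4k, where Δ̂(G) is the maximum cluster-diameter over all layering partitions of G. In particular, the bound sl(G) ≤ ⌊Δ̂(G)/2⌋ is sharp. -/
open SimpleGraph

/-- Two vertices `u, v` lie in the same cluster of the layering partition of `G`
with respect to start vertex `s`: they are in the same layer and are connected by a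
walk all of whose vertices are at distance at least `d_G(s,u)` from `s`. -/
def SameCluster {V : Type} (G : SimpleGraph V) (s u v : V) : Prop :=
  G.dist s u = G.dist s v ∧
  ∃ p : G.Walk u v, ∀ w ∈ p.support, G.dist s u ≤ G.dist s w

open scoped Classical in
/-- The cluster-diameter `Δ_s(G)` of the layering partition of `G` w.r.t. `s`:
the largest distance in `G` between two vertices lying in a common cluster. -/
noncomputable def clusterDiam {V : Type} [Fintype V] (G : SimpleGraph V) (s : V) : ℕ :=
  Finset.univ.sup fun p : V × V =>
    if SameCluster G s p.1 p.2 then G.dist p.1 p.2 else 0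

/-- `Δ̂(G)`: the maximum cluster-diameter over all layering partitions of `G`. -/
noncomputable def maxClusterDiam {V : Type} [Fintype V] (G : SimpleGraph V) : ℕ :=
  Finset.univ.sup fun s : V => clusterDiam G s

/-- A walk is a geodesic (shortest path) if its length equals the distance
between its endpoints. -/
def IsGeodesic {V : Type} (G : SimpleGraph V) {x y : V} (p : G.Walk x y) : Prop :=
  p.length = G.dist x y

/-- `G` is `δ`-slim: in every geodesic triangle, every vertex on one side is within
distance `δ` (in `G`) from the union of the other two sides. -/
def IsSlim {V : Type} (G : SimpleGraph V) (δ : ℕ) : Prop :=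
  ∀ (x y z : V) (pxy : G.Walk x y) (pxz : G.Walk x z) (pyz : G.Walk y z),
    IsGeodesic G pxy → IsGeodesic G pxz → IsGeodesic G pyz →
    ∀ u ∈ pxy.support, ∃ v, (v ∈ pxz.support ∨ v ∈ pyz.support) ∧ G.dist u v ≤ δ

/-- The slimness `sl(G)`: the smallest `δ` such that `G` is `δ`-slim. -/
noncomputable def slimness {V : Type} (G : SimpleGraph V) : ℕ :=
  sInf {δ : ℕ | IsSlim G δ}


/-- The cycle graph on `ZMod n`. -/
def cyc (n : ℕ) : SimpleGraph (ZMod n) where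
  Adj u v := u ≠ v ∧ (v = u + 1 ∨ u = v + 1)
  symm := ⟨by rintro u v ⟨h1, h2⟩; exact ⟨h1.symm, h2.symm⟩⟩
  loopless := ⟨by rintro u ⟨h1, _⟩; exact h1 rfl⟩

lemma cyc_adj (n : ℕ) (hn : 2 ≤ n) (i : ZMod n) : (cyc n).Adj i (i + 1) := by
  haveI : Fact (1 < n) := ⟨hn⟩
  refine ⟨fun h => ?_, Or.inl rfl⟩
  exact one_ne_zero (left_eq_add.mp h)

/-- Existence of a "forward" walk of length `m` from `i` to `i + m`, with control on
its support. -/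
lemma cyc_walk (n : ℕ) (hn : 2 ≤ n) :
    ∀ (m : ℕ) (i j : ZMod n), j = i + (m : ZMod n) →
    ∃ p : (cyc n).Walk i j, p.length = m ∧
      (∀ w ∈ p.support, ∃ t ≤ m, w = i + (t : ZMod n)) ∧
      (∀ t ≤ m, i + (t : ZMod n) ∈ p.support) := by
  intro m
  induction m with
  | zero =>
    intro i j h
    rw [Nat.cast_zero, add_zero] at h
    subst h
    refine ⟨Walk.nil, rfl, ?_, ?_⟩
    · intro w hw
      simp only [Walk.support_nil, List.mem_singleton] at hw
      exact ⟨0, le_refl _, by simp [hw]⟩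
    · intro t ht
      interval_cases t
      simp
  | succ m ih =>
    intro i j h
    obtain ⟨p, hl, hs, hm⟩ := ih (i + 1) j (by rw [h]; push_cast; ring)
    refine ⟨Walk.cons (cyc_adj n hn i) p, by simp [hl], ?_, ?_⟩
    · intro w hw
      rw [Walk.support_cons, List.mem_cons] at hw
      rcases hw with h1 | h2
      · exact ⟨0, Nat.zero_le _, by simp [h1]⟩
      · obtain ⟨t, ht, hw⟩ := hs w h2
        exact ⟨t + 1, by omega, by rw [hw]; push_cast; ring⟩
    · intro t ht
      rw [Walk.support_cons, List.mem_cons]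
      match t with
      | 0 => left; simp
      | t + 1 =>
        right
        have he : i + ((t + 1 : ℕ) : ZMod n) = i + 1 + (t : ZMod n) := by
          push_cast; ring
        rw [he]
        exact hm t (by omega)

/-- Circular distance function. -/
def cm (n : ℕ) (x : ZMod n) : ℕ := min x.val (-x).val

lemma cm_neg (n : ℕ) (x : ZMod n) : cm n (-x) = cm n x := by
  unfold cm; rw [neg_neg, Nat.min_comm]

lemma cm_add_one (n : ℕ) [NeZero n] (hn : 2 ≤ n) (x : ZMod n) :
    cm n (x + 1) ≤ cm n x + 1 := by
  haveI : Fact (1 < n) := ⟨hn⟩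
  by_cases h0 : x + 1 = 0
  · rw [h0]
    have : cm n (0 : ZMod n) = 0 := by simp [cm]
    omega
  by_cases h1 : x = 0
  · subst h1
    have : cm n (0 + 1 : ZMod n) ≤ (0 + 1 : ZMod n).val := Nat.min_le_left _ _
    rw [zero_add, ZMod.val_one] at this
    have h2 : cm n (0 : ZMod n) = 0 := by simp [cm]
    rw [zero_add]
    omega
  · have hxlt := ZMod.val_lt x
    have hxne : x.val ≠ 0 := fun h => h1 ((ZMod.val_eq_zero x).mp h)
    have hadd : (x + 1).val = x.val + 1 := by
      rw [ZMod.val_add, ZMod.val_one]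
      apply Nat.mod_eq_of_lt
      rcases Nat.lt_or_ge (x.val + 1) n with h | h
      · exact h
      · exfalso
        have heq : x.val + 1 = n := by omega
        apply h0
        apply (ZMod.val_eq_zero _).mp
        rw [ZMod.val_add, ZMod.val_one, heq, Nat.mod_self]
    have hneg1 : (-(x + 1)).val = n - (x.val + 1) := by
      rw [ZMod.neg_val, if_neg h0, hadd]
    have hneg2 : (-x).val = n - x.val := by
      rw [ZMod.neg_val, if_neg h1]
    unfold cm
    rw [hadd, hneg1, hneg2]
    omega

lemma cyc_walk_le (n : ℕ) [NeZero n] (hn : 2 ≤ n) :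
    ∀ {i j : ZMod n} (p : (cyc n).Walk i j), cm n (j - i) ≤ p.length := by
  intro i j p
  induction p with
  | nil => simp [cm]
  | @cons a b c hab p ih =>
    rw [Walk.length_cons]
    rcases hab.2 with h | h
    · have he : c - a = (c - b) + 1 := by rw [h]; ring
      rw [he]
      exact le_trans (cm_add_one n hn _) (by omega)
    · have he : c - a = -(-(c - b) + 1) := by rw [h]; ring
      rw [he, cm_neg]
      have := cm_add_one n hn (-(c - b))
      rw [cm_neg] at this
      omega

lemma cyc_dist_eq (n : ℕ) [NeZero n] (hn : 2 ≤ n) (i j : ZMod n) :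
    (cyc n).dist i j = cm n (j - i) := by
  have key : ∀ a b : ZMod n, (cyc n).dist a b ≤ (b - a).val := by
    intro a b
    obtain ⟨p, hl, -, -⟩ := cyc_walk n hn ((b - a).val) a b
      (by rw [ZMod.natCast_rightInverse (b - a)]; ring)
    exact hl ▸ SimpleGraph.dist_le p
  apply le_antisymm
  · unfold cm
    refine le_min (key i j) ?_
    rw [SimpleGraph.dist_comm]
    have := key j i
    rwa [show i - j = -(j - i) by ring] at this
  · obtain ⟨p, -, -, -⟩ := cyc_walk n hn ((j - i).val) i j
      (by rw [ZMod.natCast_rightInverse (j - i)]; ring)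
    obtain ⟨q, hq⟩ := (p.reachable).exists_walk_length_eq_dist
    have := cyc_walk_le n hn q
    omega

lemma cyc_dist_cast (n : ℕ) [NeZero n] (hn : 2 ≤ n) (a b : ℕ) (hab : a ≤ b)
    (hb : b - a < n) :
    (cyc n).dist (a : ZMod n) (b : ZMod n) = min (b - a) (n - (b - a)) := by
  rw [cyc_dist_eq n hn, ← Nat.cast_sub hab]
  unfold cm
  rw [ZMod.val_natCast_of_lt hb]
  by_cases h : b - a = 0
  · rw [h]; simp
  · rw [ZMod.neg_val, if_neg, ZMod.val_natCast_of_lt hb]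
    intro hz
    apply h
    have : ((b - a : ℕ) : ZMod n).val = 0 := by rw [hz, ZMod.val_zero]
    rwa [ZMod.val_natCast_of_lt hb] at this

lemma cyc_connected (n : ℕ) [NeZero n] (hn : 2 ≤ n) : (cyc n).Connected := by
  rw [SimpleGraph.connected_iff]
  refine ⟨fun u v => ?_, ⟨0⟩⟩
  obtain ⟨p, -, -, -⟩ := cyc_walk n hn ((v - u).val) u v
    (by rw [ZMod.natCast_rightInverse (v - u)]; ring)
  exact p.reachable

/-- For every `k ≥ 1` there is a finite connected graph `G` with `Δ̂(G) = 8k` and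
`sl(G) = 4k`; hence the bound `sl(G) ≤ ⌊Δ̂(G)/2⌋` is sharp. -/
theorem exists_graph_slimness_maxClusterDiam_sharp (k : ℕ) (hk : 1 ≤ k) :
    ∃ (V : Type) (_ : Fintype V) (G : SimpleGraph V),
      G.Connected ∧ maxClusterDiam G = 8 * k ∧ slimness G = 4 * k := by
  haveI : NeZero (16 * k) := ⟨by omega⟩
  have hn2 : 2 ≤ 16 * k := by omega
  refine ⟨ZMod (16 * k), inferInstance, cyc (16 * k), cyc_connected _ hn2, ?_, ?_⟩
  all_goals
    have hdiam : ∀ i j : ZMod (16 * k), (cyc (16 * k)).dist i j ≤ 8 * k := by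
      intro i j
      rw [cyc_dist_eq _ hn2]
      unfold cm
      by_cases h : j - i = 0
      · rw [h]; simp
      · have h1 := ZMod.val_lt (j - i)
        have h2 : (-(j - i)).val = 16 * k - (j - i).val := by
          rw [ZMod.neg_val, if_neg h]
        have h3 : (j - i).val ≠ 0 := fun hh => h ((ZMod.val_eq_zero _).mp hh)
        omega
  · -- maxClusterDiam = 8 * k
    apply le_antisymm
    · apply Finset.sup_le
      intro s _
      apply Finset.sup_le
      intro p _
      split
      · exact hdiam _ _
      · omega
    · have h48 : ((12 * k : ℕ) : ZMod (16 * k)) =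
          ((4 * k : ℕ) : ZMod (16 * k)) + ((8 * k : ℕ) : ZMod (16 * k)) := by
        push_cast; ring
      obtain ⟨p, hl, hs, -⟩ := cyc_walk (16 * k) hn2 (8 * k)
        ((4 * k : ℕ) : ZMod (16 * k)) ((12 * k : ℕ) : ZMod (16 * k)) h48
      have h0cast : ((0 : ℕ) : ZMod (16 * k)) = (0 : ZMod (16 * k)) := by simp
      have hd04 : (cyc (16 * k)).dist (0 : ZMod (16 * k)) ((4 * k : ℕ) : ZMod (16 * k))
          = 4 * k := by
        rw [← h0cast, cyc_dist_cast _ hn2 0 (4 * k) (by omega) (by omega)]; omega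
      have hd012 : (cyc (16 * k)).dist (0 : ZMod (16 * k)) ((12 * k : ℕ) : ZMod (16 * k))
          = 4 * k := by
        rw [← h0cast, cyc_dist_cast _ hn2 0 (12 * k) (by omega) (by omega)]; omega
      have hsc : SameCluster (cyc (16 * k)) (0 : ZMod (16 * k))
          ((4 * k : ℕ) : ZMod (16 * k)) ((12 * k : ℕ) : ZMod (16 * k)) := by
        refine ⟨by rw [hd04, hd012], p, ?_⟩
        intro w hw
        obtain ⟨t, ht, hwt⟩ := hs w hw
        have hw2 : w = ((4 * k + t : ℕ) : ZMod (16 * k)) := by rw [hwt]; push_cast; ring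
        rw [hw2, hd04, ← h0cast, cyc_dist_cast _ hn2 0 (4 * k + t) (by omega) (by omega)]
        omega
      have hstep : (8 * k : ℕ) ≤ clusterDiam (cyc (16 * k)) (0 : ZMod (16 * k)) := by
        unfold clusterDiam
        refine le_trans ?_ (Finset.le_sup (Finset.mem_univ
          ((((4 * k : ℕ) : ZMod (16 * k)), ((12 * k : ℕ) : ZMod (16 * k))) :
            ZMod (16 * k) × ZMod (16 * k))))
        rw [if_pos hsc, cyc_dist_cast _ hn2 (4 * k) (12 * k) (by omega) (by omega)]
        omega
      exact le_trans hstep (Finset.le_sup (Finset.mem_univ _))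
  · -- slimness = 4 * k
    have hslim : IsSlim (cyc (16 * k)) (4 * k) := by
      intro x y z pxy pxz pyz hxy hxz hyz u hu
      have h1 : (cyc (16 * k)).dist x u ≤ (pxy.takeUntil u hu).length :=
        SimpleGraph.dist_le _
      have h2 : (cyc (16 * k)).dist u y ≤ (pxy.dropUntil u hu).length :=
        SimpleGraph.dist_le _
      have h3 : (pxy.takeUntil u hu).length + (pxy.dropUntil u hu).length = pxy.length := by
        rw [← Walk.length_append, Walk.take_spec]
      have h4 : pxy.length ≤ 8 * k := by rw [hxy]; exact hdiam x y
      by_cases hc : (cyc (16 * k)).dist x u ≤ 4 * k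
      · exact ⟨x, Or.inl pxz.start_mem_support, by rwa [SimpleGraph.dist_comm]⟩
      · exact ⟨y, Or.inr pyz.start_mem_support, by omega⟩
    have hnot : ∀ m ∈ {δ : ℕ | IsSlim (cyc (16 * k)) δ}, 4 * k ≤ m := by
      intro m hm
      by_contra hlt
      push_neg at hlt
      obtain ⟨pxy, hl1, -, hmem1⟩ := cyc_walk (16 * k) hn2 (8 * k)
        ((0 : ℕ) : ZMod (16 * k)) ((8 * k : ℕ) : ZMod (16 * k)) (by push_cast; ring)
      obtain ⟨q, hl2, hs2, -⟩ := cyc_walk (16 * k) hn2 (8 * k)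
        ((8 * k : ℕ) : ZMod (16 * k)) ((0 : ℕ) : ZMod (16 * k)) (by
          rw [← Nat.cast_add, show 8 * k + 8 * k = 16 * k by ring, ZMod.natCast_self,
            Nat.cast_zero])
      have hd08 : (cyc (16 * k)).dist ((0 : ℕ) : ZMod (16 * k))
          ((8 * k : ℕ) : ZMod (16 * k)) = 8 * k := by
        rw [cyc_dist_cast _ hn2 0 (8 * k) (by omega) (by omega)]; omega
      have hg1 : IsGeodesic (cyc (16 * k)) pxy := by rw [IsGeodesic, hl1, hd08]
      have hg2 : IsGeodesic (cyc (16 * k)) q.reverse := by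
        rw [IsGeodesic, Walk.length_reverse, hl2, hd08]
      have hg3 : IsGeodesic (cyc (16 * k))
          (Walk.nil : (cyc (16 * k)).Walk ((8 * k : ℕ) : ZMod (16 * k)) _) := by
        rw [IsGeodesic, Walk.length_nil, SimpleGraph.dist_self]
      have hu : ((4 * k : ℕ) : ZMod (16 * k)) ∈ pxy.support := by
        have := hmem1 (4 * k) (by omega)
        rwa [show ((0 : ℕ) : ZMod (16 * k)) + ((4 * k : ℕ) : ZMod (16 * k)) =
          ((4 * k : ℕ) : ZMod (16 * k)) by push_cast; ring] at this
      obtain ⟨v, hv, hdv⟩ := hm _ _ _ pxy q.reverse Walk.nil hg1 hg2 hg3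
        ((4 * k : ℕ) : ZMod (16 * k)) hu
      have h4le : 4 * k ≤ (cyc (16 * k)).dist ((4 * k : ℕ) : ZMod (16 * k)) v := by
        rcases hv with hv | hv
        · rw [Walk.support_reverse, List.mem_reverse] at hv
          obtain ⟨t, ht, hvt⟩ := hs2 v hv
          have hv2 : v = ((8 * k + t : ℕ) : ZMod (16 * k)) := by
            rw [hvt]; push_cast; ring
          rw [hv2, cyc_dist_cast _ hn2 (4 * k) (8 * k + t) (by omega) (by omega)]
          omega
        · simp only [Walk.support_nil, List.mem_singleton] at hv
          rw [hv, cyc_dist_cast _ hn2 (4 * k) (8 * k) (by omega) (by omega)]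
          omega
      omega
    exact le_antisymm (Nat.sInf_le hslim) (le_csInf ⟨4 * k, hslim⟩ hnot)
end

section
/- For every integer k ≥ 1, there exists a finite connected simple graph G of chordality exactly 4k (every induced cycle of G has length at most 4k, and G contains an induced cycle of length 4k) whose slimness equals k + 1. In particular, the bound sl(G) ≤ ⌊k/4⌋ + 1 for k-chordal graphs is sharp. -/
open SimpleGraph

namespace Sharp


def R (k : ℕ) (i j : ℕ) : Prop :=
  j = i + 1 ∨ (i = 0 ∧ j = 4*k+3) ∨ (i = 1 ∧ j = 4*k+2) ∨ (i = 1 ∧ j = 4*k+3)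
  ∨ (i = 2*k+1 ∧ j = 2*k+3) ∨ (i = 2*k+1 ∧ j = 2*k+4)

def GG (k : ℕ) : SimpleGraph (Fin ((4*k+4))) where
  Adj a b := a ≠ b ∧ (R k a.val b.val ∨ R k b.val a.val)
  symm := ⟨by intro a b ⟨h1, h2⟩; exact ⟨h1.symm, h2.symm⟩⟩
  loopless := ⟨fun a h => h.1 rfl⟩

variable {k : ℕ}

lemma adj_succ {a b : Fin ((4*k+4))} (h : b.val = a.val + 1) : (GG k).Adj a b :=
  ⟨fun he => by subst he; omega, Or.inl (Or.inl h)⟩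

/-- walk going up along the ring path -/
def walkUp : (d : ℕ) → (a b : Fin ((4*k+4))) → b.val = a.val + d → (GG k).Walk a b
  | 0, a, b, h => (Fin.ext h.symm : a = b) ▸ Walk.nil
  | (d+1), a, b, h =>
      Walk.cons (adj_succ (a := a) (b := ⟨a.val+1, by omega⟩) rfl)
        (walkUp d ⟨a.val+1, by omega⟩ b (by simp; omega))

@[simp] lemma walkUp_length (d : ℕ) (a b : Fin ((4*k+4))) (h : b.val = a.val + d) :
    (walkUp d a b h).length = d := by
  induction d generalizing a with
  | zero => have : a = b := Fin.ext (by omega); subst this; rfl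
  | succ d ih => simp [walkUp, ih]

lemma walkUp_support_val (d : ℕ) (a b : Fin ((4*k+4))) (h : b.val = a.val + d) :
    (walkUp d a b h).support.map Fin.val = List.range' a.val (d+1) 1 := by
  induction d generalizing a with
  | zero => have : a = b := Fin.ext (by omega); subst this; simp [walkUp]
  | succ d ih =>
      rw [List.range'_succ]
      simpa [walkUp] using ih ⟨a.val+1, by omega⟩ (by simp; omega)

lemma mem_walkUp_support {d : ℕ} {a b : Fin ((4*k+4))} {h : b.val = a.val + d} {x : Fin ((4*k+4))} :
    x ∈ (walkUp d a b h).support ↔ a.val ≤ x.val ∧ x.val ≤ b.val := by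
  have h2 : x ∈ (walkUp d a b h).support ↔
      x.val ∈ (walkUp d a b h).support.map Fin.val := by
    constructor
    · exact fun hx => List.mem_map_of_mem (f := Fin.val) hx
    · intro hx
      obtain ⟨y, hy, hv⟩ := List.mem_map.mp hx
      exact (Fin.ext hv.symm : x = y) ▸ hy
  rw [h2, walkUp_support_val, List.mem_range'_1]
  omega

lemma walkUp_edges_mem {d : ℕ} {a b : Fin ((4*k+4))} {h : b.val = a.val + d}
    {x y : Fin ((4*k+4))} (hx : a.val ≤ x.val) (hy : y.val = x.val + 1) (hyb : y.val ≤ b.val) :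
    s(x, y) ∈ (walkUp d a b h).edges := by
  induction d generalizing a with
  | zero => omega
  | succ d ih =>
      simp only [walkUp, Walk.edges_cons, List.mem_cons]
      rcases Nat.eq_or_lt_of_le hx with he | hlt
      · left
        have hx' : x = a := Fin.ext he.symm
        have hy' : y = (⟨a.val+1, by omega⟩ : Fin ((4*k+4))) := Fin.ext (by simp; omega)
        rw [hx', hy']
      · right
        exact ih (a := ⟨a.val+1, by omega⟩) (h := by simp; omega) (by simp; omega)

lemma walkUp_edges_shape {d : ℕ} {a b : Fin ((4*k+4))} {h : b.val = a.val + d}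
    {x y : Fin ((4*k+4))} (he : s(x, y) ∈ (walkUp d a b h).edges) :
    (y.val = x.val + 1 ∨ x.val = y.val + 1) ∧ a.val ≤ min x.val y.val ∧ max x.val y.val ≤ b.val := by
  induction d generalizing a with
  | zero => have : a = b := Fin.ext (by omega); subst this; simp [walkUp] at he
  | succ d ih =>
      simp only [walkUp, Walk.edges_cons, List.mem_cons] at he
      rcases he with he | he
      · rw [Sym2.eq_iff] at he
        rcases he with ⟨h1, h2⟩ | ⟨h1, h2⟩
        · have e1 : x.val = a.val := congrArg Fin.val h1
          have e2 : y.val = a.val + 1 := by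
            have := congrArg Fin.val h2; simpa using this
          simp only [ge_iff_le, le_min_iff, max_le_iff]; omega
        · have e1 : x.val = a.val + 1 := by
            have := congrArg Fin.val h1; simpa using this
          have e2 : y.val = a.val := congrArg Fin.val h2
          simp only [ge_iff_le, le_min_iff, max_le_iff]; omega
      · have := ih (a := ⟨a.val+1, by omega⟩) (h := by simp; omega) he
        simp only [ge_iff_le, le_min_iff, max_le_iff] at this ⊢
        simp at this; omega


/-! ## potentials and distance bounds -/

lemma pot_walk_bound (g : Fin ((4*k+4)) → ℕ)
    (hg : ∀ a b : Fin ((4*k+4)), (GG k).Adj a b → g b ≤ g a + 1) :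
    ∀ {x y : Fin ((4*k+4))} (w : (GG k).Walk x y), g y ≤ g x + w.length := by
  intro x y w
  induction w with
  | nil => simp
  | cons h p ih =>
      have := hg _ _ h
      simp only [Walk.length_cons]
      omega

/-- distance lower bound from a 1-Lipschitz potential -/
lemma pot_dist_bound (g : Fin ((4*k+4)) → ℕ)
    (hg : ∀ a b : Fin ((4*k+4)), (GG k).Adj a b → g b ≤ g a + 1)
    {x y : Fin ((4*k+4))} (hr : (GG k).Reachable x y) :
    g y ≤ g x + (GG k).dist x y := by
  obtain ⟨w, hw⟩ := hr.exists_walk_length_eq_dist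
  rw [← hw]
  exact pot_walk_bound g hg w

lemma reach_zero (a : Fin ((4*k+4))) : (GG k).Reachable a ⟨0, by omega⟩ := by
  exact ⟨(walkUp a.val ⟨0, by omega⟩ a (by simp)).reverse⟩

lemma GG_connected : (GG k).Connected := by
  rw [connected_iff]
  refine ⟨fun a b => (reach_zero a).trans (reach_zero b).symm, ⟨⟨0, by omega⟩⟩⟩

lemma adj_wrap : (GG k).Adj ⟨0, by omega⟩ ⟨4*k+3, by omega⟩ := by
  refine ⟨?_, Or.inl ?_⟩
  · intro h; have := congrArg Fin.val h; simp at this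
  · right; left; exact ⟨rfl, rfl⟩

/-- diameter bound: every distance is at most 2k+2 -/
lemma dist_le_diam (a b : Fin ((4*k+4))) : (GG k).dist a b ≤ 2*k+2 := by
  -- wlog a ≤ b
  have main : ∀ a b : Fin ((4*k+4)), a.val ≤ b.val → (GG k).dist a b ≤ 2*k+2 := by
    intro a b hab
    by_cases hd : b.val - a.val ≤ 2*k+2
    · have := SimpleGraph.dist_le (walkUp (b.val - a.val) a b (by omega))
      rw [walkUp_length] at this
      omega
    · -- go around: a → 0 → 4k+3 → b
      have hb : b.val ≤ 4*k+3 := by have := b.isLt; omega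
      have hd2 : b.val - a.val ≥ 2*k+3 := by omega
      have := SimpleGraph.dist_le
        ((((walkUp a.val ⟨0, by omega⟩ a (by simp)).reverse.append
            (Walk.cons adj_wrap Walk.nil)).append
          (walkUp (4*k+3 - b.val) b ⟨4*k+3, by omega⟩ (by simp; omega)).reverse))
      simp only [Walk.length_append, Walk.length_reverse, Walk.length_cons,
        Walk.length_nil, walkUp_length] at this
      omega
  rcases le_total a.val b.val with h | h
  · exact main a b h
  · rw [SimpleGraph.dist_comm]; exact main b a h


/-! ## potentials -/

def g0 (k : ℕ) (i : Fin (4*k+4)) : ℕ := min i.val (4*k+4 - i.val)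
def gu (k : ℕ) (i : Fin (4*k+4)) : ℕ := min (Nat.dist i.val (k+1)) (k+1)

lemma g0_lip : ∀ a b : Fin (4*k+4), (GG k).Adj a b → g0 k b ≤ g0 k a + 1 := by
  intro a b ⟨hne, h⟩
  have ha := a.isLt
  have hb := b.isLt
  simp only [R] at h
  simp only [g0]
  omega

lemma gu_lip : ∀ a b : Fin (4*k+4), (GG k).Adj a b → gu k b ≤ gu k a + 1 := by
  intro a b ⟨hne, h⟩
  have ha := a.isLt
  have hb := b.isLt
  simp only [R] at h
  simp only [gu, Nat.dist]
  omega

/-! ## slimness -/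

lemma slim_ub : IsSlim (GG k) (k+1) := by
  intro x y z pxy pxz pyz hxy hxz hyz u hu
  have h1 : (GG k).dist x u ≤ (pxy.takeUntil u hu).length := SimpleGraph.dist_le _
  have h2 : (GG k).dist u y ≤ (pxy.dropUntil u hu).length := SimpleGraph.dist_le _
  have h3 : (pxy.takeUntil u hu).length + (pxy.dropUntil u hu).length = pxy.length := by
    rw [← Walk.length_append, pxy.take_spec hu]
  have h4 : pxy.length ≤ 2*k+2 := by
    rw [hxy]; exact dist_le_diam x y
  by_cases hxu : (GG k).dist x u ≤ k+1
  · exact ⟨x, Or.inl pxz.start_mem_support, by rwa [SimpleGraph.dist_comm]⟩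
  · exact ⟨y, Or.inr pyz.start_mem_support, by omega⟩

def vx (k : ℕ) : Fin (4*k+4) := ⟨0, by omega⟩
def vyy (k : ℕ) : Fin (4*k+4) := ⟨2*k+2, by omega⟩
def vuu (k : ℕ) : Fin (4*k+4) := ⟨k+1, by omega⟩
def vzz (k : ℕ) : Fin (4*k+4) := ⟨4*k+3, by omega⟩

lemma reach_zero' (a : Fin (4*k+4)) : (GG k).Reachable a (vx k) :=
  ⟨(walkUp a.val (vx k) a (by simp [vx])).reverse⟩

lemma adj_wrap' : (GG k).Adj (vx k) (vzz k) := by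
  refine ⟨?_, Or.inl ?_⟩
  · intro h; have := congrArg Fin.val h; simp [vx, vzz] at this
  · right; left; exact ⟨rfl, rfl⟩

def wA (k : ℕ) : (GG k).Walk (vx k) (vyy k) :=
  (walkUp (k+1) (vx k) (vuu k) (by simp [vx, vuu]; try omega)).append
    (walkUp (k+1) (vuu k) (vyy k) (by simp [vuu, vyy]; try omega))

def wB (k : ℕ) : (GG k).Walk (vyy k) (vx k) :=
  (walkUp (2*k+1) (vyy k) (vzz k) (by simp [vyy, vzz]; omega)).concat adj_wrap'.symm

lemma dist_x_y : (GG k).dist (vx k) (vyy k) = 2*k+2 := by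
  refine le_antisymm (dist_le_diam _ _) ?_
  have h := pot_dist_bound (g0 k) g0_lip (reach_zero' (vyy k)).symm
  have e1 : g0 k (vx k) = 0 := by simp [g0, vx]
  have e2 : g0 k (vyy k) = 2*k+2 := by simp [g0, vyy]; omega
  rw [e1, e2] at h
  omega

lemma slim_lb : ¬ IsSlim (GG k) k := by
  intro hs
  have hAlen : (wA k).length = 2*k+2 := by
    rw [wA, Walk.length_append]
    exact (congrArg₂ (· + ·) (walkUp_length _ _ _ _) (walkUp_length _ _ _ _)).trans (by omega)
  have hBlen : (wB k).length = 2*k+2 := by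
    rw [wB, Walk.length_concat, walkUp_length]
  have hAgeo : IsGeodesic (GG k) (wA k) := by
    rw [IsGeodesic, hAlen, dist_x_y]
  have hBgeo : IsGeodesic (GG k) (wB k) := by
    rw [IsGeodesic, hBlen, SimpleGraph.dist_comm, dist_x_y]
  have hNgeo : IsGeodesic (GG k) (Walk.nil : (GG k).Walk (vx k) (vx k)) := by
    simp [IsGeodesic, SimpleGraph.dist_self]
  have humem : vuu k ∈ (wA k).support := by
    rw [wA, Walk.mem_support_append_iff]
    exact Or.inl (Walk.end_mem_support _)
  obtain ⟨v, hv, hdist⟩ := hs (vx k) (vyy k) (vx k) (wA k) Walk.nil (wB k)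
    hAgeo hNgeo hBgeo (vuu k) humem
  have hval : v.val = 0 ∨ (2*k+2 ≤ v.val ∧ v.val ≤ 4*k+3) := by
    rcases hv with hv | hv
    · left
      simp only [Walk.support_nil, List.mem_cons, List.not_mem_nil, or_false] at hv
      rw [hv, vx]
    · rw [wB, Walk.support_concat] at hv
      simp only [List.concat_eq_append, List.mem_append, List.mem_singleton] at hv
      rcases hv with hv | hv
      · right
        have := mem_walkUp_support.mp hv
        simpa [vyy, vzz] using this
      · left; rw [hv, vx]
  have hguv : gu k v = k + 1 := by
    simp only [gu, Nat.dist]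
    omega
  have hpb := pot_dist_bound (gu k) gu_lip ((reach_zero' (vuu k)).trans (reach_zero' v).symm)
  have e1 : gu k (vuu k) = 0 := by simp [gu, vuu, Nat.dist]
  rw [hguv, e1] at hpb
  omega

lemma slimness_eq : slimness (GG k) = k + 1 := by
  show sInf {δ : ℕ | IsSlim (GG k) δ} = k + 1
  have hmono : ∀ d d' : ℕ, d ≤ d' → IsSlim (GG k) d → IsSlim (GG k) d' := by
    intro d d' hdd h x y z pxy pxz pyz h1 h2 h3 u hu
    obtain ⟨v, hv, hd⟩ := h x y z pxy pxz pyz h1 h2 h3 u hu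
    exact ⟨v, hv, le_trans hd hdd⟩
  have hne : {δ : ℕ | IsSlim (GG k) δ}.Nonempty := ⟨k+1, slim_ub⟩
  have hmem := Nat.sInf_mem hne
  refine le_antisymm (Nat.sInf_le slim_ub) ?_
  by_contra hlt
  push_neg at hlt
  exact slim_lb (hmono _ k (by omega) hmem)


/-! ## generic cycle lemmas -/

section Generic
variable {V : Type} [DecidableEq V] {G : SimpleGraph V}

lemma path_loop_nil {a : V} {r : G.Walk a a} (hr : r.IsPath) : r = Walk.nil := by
  cases r with
  | nil => rfl
  | cons h t =>
      rw [Walk.cons_isPath_iff] at hr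
      exact absurd t.end_mem_support hr.2

lemma path_edge_start_unique {u v x y : V} {r : G.Walk u v} (hr : r.IsPath)
    (hx : s(u, x) ∈ r.edges) (hy : s(u, y) ∈ r.edges) : x = y := by
  cases r with
  | cons h t =>
      rename_i w
      rw [Walk.cons_isPath_iff] at hr
      have key : ∀ z, s(u, z) ∈ (Walk.cons h t).edges → z = w := by
        intro z hz
        rw [Walk.edges_cons, List.mem_cons] at hz
        rcases hz with hz | hz
        · rw [Sym2.eq_iff] at hz
          rcases hz with ⟨-, hz⟩ | ⟨hz1, hz2⟩
          · exact hz
          · exact absurd (hz1 ▸ h) G.irrefl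
        · exact absurd (Walk.fst_mem_support_of_mem_edges t hz) hr.2
      rw [key x hx, key y hy]
  | nil => simp at hx

lemma path_edge_start_decomp {u v x : V} {r : G.Walk u v} (hr : r.IsPath)
    (hx : s(u, x) ∈ r.edges) : ∃ (h : G.Adj u x) (r' : G.Walk x v),
      r = Walk.cons h r' := by
  cases r with
  | cons h t =>
      rw [Walk.cons_isPath_iff] at hr
      rw [Walk.edges_cons, List.mem_cons] at hx
      rcases hx with hx | hx
      · rw [Sym2.eq_iff] at hx
        rcases hx with ⟨-, hx⟩ | ⟨hx1, hx2⟩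
        · subst hx; exact ⟨h, t, rfl⟩
        · exact absurd (hx1 ▸ h) G.irrefl
      · exact absurd (Walk.fst_mem_support_of_mem_edges t hx) hr.2
  | nil => simp at hx

/-- in a cycle, a vertex of the support has two distinct incident cycle edges -/
lemma cycle_two_nbrs {v w : V} {p : G.Walk v v} (hp : p.IsCycle) (hw : w ∈ p.support) :
    ∃ a b, a ≠ b ∧ s(w, a) ∈ p.edges ∧ s(w, b) ∈ p.edges := by
  have hq : (p.rotate w hw).IsCycle := hp.rotate hw
  have hmem : ∀ e, e ∈ (p.rotate w hw).edges ↔ e ∈ p.edges := fun e =>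
    (p.rotate_edges w hw).mem_iff
  set q := p.rotate w hw with hqdef
  clear_value q
  have h3 : 3 ≤ q.length := hq.three_le_length
  cases q with
  | nil => simp at h3
  | cons h r =>
      rename_i d
      have hr : r.IsPath := ((Walk.cons_isCycle_iff r h).mp hq).1
      have hrev : r.reverse.IsPath := hr.reverse
      cases hrev' : r.reverse with
      | nil =>
          have := congrArg Walk.length hrev'
          simp only [Walk.length_reverse, Walk.length_nil] at this
          simp only [Walk.length_cons, this] at h3
          omega
      | cons h' t =>
          rename_i e
          have hlast : s(w, e) ∈ r.edges := by
            have : s(w, e) ∈ r.reverse.edges := by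
              rw [hrev', Walk.edges_cons]; exact List.mem_cons_self
            rwa [Walk.edges_reverse, List.mem_reverse] at this
          refine ⟨d, e, ?_, ?_, ?_⟩
          · intro hde
            subst hde
            rw [hrev', Walk.cons_isPath_iff] at hrev
            have := path_loop_nil hrev.1
            subst this
            have := congrArg Walk.length hrev'
            simp only [Walk.length_reverse, Walk.length_cons, Walk.length_nil] at this
            simp only [Walk.length_cons, this] at h3
            omega
          · rw [← hmem, Walk.edges_cons]; exact List.mem_cons_self
          · rw [← hmem, Walk.edges_cons]
            exact List.mem_cons.mpr (Or.inr hlast)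

lemma cycle_triangle_aux {a d c : V} (h : G.Adj a d) {r : G.Walk d a}
    (hr : r.IsPath)
    (hdc : s(d, c) ∈ (Walk.cons h r).edges) (hca : s(c, a) ∈ (Walk.cons h r).edges)
    (hdcne : d ≠ c) (hcane : c ≠ a) : (Walk.cons h r).length = 3 := by
  have hadne : a ≠ d := h.ne
  have hdc' : s(d, c) ∈ r.edges := by
    rw [Walk.edges_cons, List.mem_cons] at hdc
    rcases hdc with hx | hx
    · rw [Sym2.eq_iff] at hx
      rcases hx with ⟨hd1, -⟩ | ⟨-, hc2⟩
      · exact absurd hd1.symm hadne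
      · exact absurd hc2 hcane
    · exact hx
  obtain ⟨h1, r1, hr1⟩ := path_edge_start_decomp hr hdc'
  subst hr1
  rw [Walk.cons_isPath_iff] at hr
  have hca' : s(c, a) ∈ r1.edges := by
    rw [Walk.edges_cons, List.mem_cons] at hca
    rcases hca with hx | hx
    · rw [Sym2.eq_iff] at hx
      rcases hx with ⟨hc1, -⟩ | ⟨hc1, ha2⟩
      · exact absurd hc1 hcane
      · exact absurd hc1 hdcne.symm
    · rw [Walk.edges_cons, List.mem_cons] at hx
      rcases hx with hx | hx
      · rw [Sym2.eq_iff] at hx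
        rcases hx with ⟨hc1, -⟩ | ⟨-, ha2⟩
        · exact absurd hc1 hdcne.symm
        · exact absurd ha2 hadne
      · exact hx
  obtain ⟨h2, r2, hr2⟩ := path_edge_start_decomp hr.1 hca'
  subst hr2
  rw [Walk.cons_isPath_iff] at hr
  have : r2 = Walk.nil := path_loop_nil hr.1.1
  subst this
  simp

lemma cycle_triangle {v a b c : V} {p : G.Walk v v} (hp : p.IsCycle)
    (hab : s(a, b) ∈ p.edges) (hbc : s(b, c) ∈ p.edges) (hca : s(c, a) ∈ p.edges) :
    p.length = 3 := by
  have habne : a ≠ b := (Walk.adj_of_mem_edges p hab).ne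
  have hbcne : b ≠ c := (Walk.adj_of_mem_edges p hbc).ne
  have hcane : c ≠ a := (Walk.adj_of_mem_edges p hca).ne
  have ha : a ∈ p.support := Walk.fst_mem_support_of_mem_edges p hab
  have hq : (p.rotate a ha).IsCycle := hp.rotate ha
  have hmem : ∀ e, e ∈ (p.rotate a ha).edges ↔ e ∈ p.edges := fun e =>
    (p.rotate_edges a ha).mem_iff
  have hlen : (p.rotate a ha).length = p.length := by
    have := (p.rotate_edges a ha).perm.length_eq
    rwa [Walk.length_edges, Walk.length_edges] at this
  rw [← hlen]
  set q := p.rotate a ha with hqdef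
  clear_value q
  cases q with
  | nil => exact absurd rfl hq.ne_nil
  | cons h r =>
      rename_i d
      have hr : r.IsPath := ((Walk.cons_isCycle_iff r h).mp hq).1
      have hab' : s(a, b) ∈ (Walk.cons h r).edges := (hmem _).mpr hab
      have hbc' : s(b, c) ∈ (Walk.cons h r).edges := (hmem _).mpr hbc
      have hca' : s(c, a) ∈ (Walk.cons h r).edges := (hmem _).mpr hca
      rw [Walk.edges_cons, List.mem_cons] at hab'
      rcases hab' with he | he
      · rw [Sym2.eq_iff] at he
        rcases he with ⟨-, hbd⟩ | ⟨had, -⟩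
        · subst hbd
          exact cycle_triangle_aux h hr hbc' hca' hbcne hcane
        · exact absurd (had ▸ h) G.irrefl
      · have hcd : c = d := by
          rw [Walk.edges_cons, List.mem_cons] at hca'
          rcases hca' with hx | hx
          · rw [Sym2.eq_iff] at hx
            rcases hx with ⟨hc1, -⟩ | ⟨hc1, -⟩
            · exact absurd hc1 hcane
            · exact hc1
          · exfalso
            have h1 : s(a, b) ∈ r.reverse.edges := by
              rw [Walk.edges_reverse, List.mem_reverse]; exact he
            have h2 : s(a, c) ∈ r.reverse.edges := by
              rw [Walk.edges_reverse, List.mem_reverse, Sym2.eq_swap]; exact hx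
            exact hbcne (path_edge_start_unique hr.reverse h1 h2)
        subst hcd
        refine cycle_triangle_aux h hr ?_ ?_ hbcne.symm habne.symm
        · rw [Sym2.eq_swap]; exact hbc'
        · rw [Sym2.eq_swap]; exact (hmem _).mpr hab

end Generic

/-! ## chordality -/

def v23 (k : ℕ) : Fin (4*k+4) := ⟨2*k+3, by omega⟩

lemma triangle_force {v : Fin (4*k+4)} {p : (GG k).Walk v v}
    (hp : p.IsCycle)
    (hind : ∀ a b, a ∈ p.support → b ∈ p.support → (GG k).Adj a b → s(a, b) ∈ p.edges)
    (hlen : p.length ≠ 3) {w a b : Fin (4*k+4)}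
    (ha : s(w, a) ∈ p.edges) (hb : s(w, b) ∈ p.edges) (hadj : (GG k).Adj a b) : False := by
  have hsa : a ∈ p.support := Walk.snd_mem_support_of_mem_edges p ha
  have hsb : b ∈ p.support := Walk.snd_mem_support_of_mem_edges p hb
  have hab : s(a, b) ∈ p.edges := hind a b hsa hsb hadj
  exact hlen (cycle_triangle hp ha hab (by rwa [Sym2.eq_swap]))

lemma val_ne_of_ne {a b : Fin (4*k+4)} (h : a ≠ b) : a.val ≠ b.val :=
  fun hv => h (Fin.ext hv)

lemma mk_adj {i j : ℕ} (hi : i < 4*k+4) (hj : j < 4*k+4) (hne : i ≠ j)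
    (hR : R k i j) : (GG k).Adj ⟨i, hi⟩ ⟨j, hj⟩ :=
  ⟨fun h => hne (congrArg Fin.val h), Or.inl hR⟩

section Excl
variable (hk : 1 ≤ k) {v : Fin (4*k+4)} {p : (GG k).Walk v v}
  (hp : p.IsCycle)
  (hind : ∀ a b, a ∈ p.support → b ∈ p.support → (GG k).Adj a b → s(a, b) ∈ p.edges)
  (hlen : p.length ≠ 3)
include hk hp hind hlen

lemma excl0 : vx k ∉ p.support := by
  intro hw
  obtain ⟨a, b, hne, ha, hb⟩ := cycle_two_nbrs hp hw
  have hva : a.val = 1 ∨ a.val = 4*k+3 := by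
    obtain ⟨-, h⟩ := Walk.adj_of_mem_edges p ha
    have := a.isLt
    simp only [R, vx] at h
    omega
  have hvb : b.val = 1 ∨ b.val = 4*k+3 := by
    obtain ⟨-, h⟩ := Walk.adj_of_mem_edges p hb
    have := b.isLt
    simp only [R, vx] at h
    omega
  have hvne := val_ne_of_ne hne
  rcases hva with ha1 | ha1 <;> rcases hvb with hb1 | hb1
  · omega
  · -- a = 1, b = 4k+3
    refine triangle_force hp hind hlen ha hb ⟨fun h => hvne (congrArg Fin.val h), Or.inl ?_⟩
    rw [ha1, hb1]
    exact Or.inr (Or.inr (Or.inr (Or.inl ⟨rfl, rfl⟩)))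
  · refine triangle_force hp hind hlen hb ha ⟨fun h => hvne.symm (congrArg Fin.val h), Or.inl ?_⟩
    rw [ha1, hb1]
    exact Or.inr (Or.inr (Or.inr (Or.inl ⟨rfl, rfl⟩)))
  · omega

lemma excl_y : vyy k ∉ p.support := by
  intro hw
  obtain ⟨a, b, hne, ha, hb⟩ := cycle_two_nbrs hp hw
  have hva : a.val = 2*k+1 ∨ a.val = 2*k+3 := by
    obtain ⟨-, h⟩ := Walk.adj_of_mem_edges p ha
    have := a.isLt
    simp only [R, vyy] at h
    omega
  have hvb : b.val = 2*k+1 ∨ b.val = 2*k+3 := by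
    obtain ⟨-, h⟩ := Walk.adj_of_mem_edges p hb
    have := b.isLt
    simp only [R, vyy] at h
    omega
  have hvne := val_ne_of_ne hne
  rcases hva with ha1 | ha1 <;> rcases hvb with hb1 | hb1
  · omega
  · refine triangle_force hp hind hlen ha hb ⟨fun h => hvne (congrArg Fin.val h), Or.inl ?_⟩
    rw [ha1, hb1]
    exact Or.inr (Or.inr (Or.inr (Or.inr (Or.inl ⟨rfl, rfl⟩))))
  · refine triangle_force hp hind hlen hb ha ⟨fun h => hvne.symm (congrArg Fin.val h), Or.inl ?_⟩
    rw [ha1, hb1]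
    exact Or.inr (Or.inr (Or.inr (Or.inr (Or.inl ⟨rfl, rfl⟩))))
  · omega

lemma excl_z : vzz k ∉ p.support := by
  intro hw
  have h0 := excl0 hk hp hind hlen
  obtain ⟨a, b, hne, ha, hb⟩ := cycle_two_nbrs hp hw
  have hsa : a ∈ p.support := Walk.snd_mem_support_of_mem_edges p ha
  have hsb : b ∈ p.support := Walk.snd_mem_support_of_mem_edges p hb
  have ha0 : a.val ≠ 0 := fun h => h0 ((Fin.ext (h.trans rfl) : a = vx k) ▸ hsa)
  have hb0 : b.val ≠ 0 := fun h => h0 ((Fin.ext (h.trans rfl) : b = vx k) ▸ hsb)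
  have hva : a.val = 1 ∨ a.val = 4*k+2 := by
    obtain ⟨-, h⟩ := Walk.adj_of_mem_edges p ha
    have := a.isLt
    simp only [R, vzz] at h
    omega
  have hvb : b.val = 1 ∨ b.val = 4*k+2 := by
    obtain ⟨-, h⟩ := Walk.adj_of_mem_edges p hb
    have := b.isLt
    simp only [R, vzz] at h
    omega
  have hvne := val_ne_of_ne hne
  rcases hva with ha1 | ha1 <;> rcases hvb with hb1 | hb1
  · omega
  · refine triangle_force hp hind hlen ha hb ⟨fun h => hvne (congrArg Fin.val h), Or.inl ?_⟩
    rw [ha1, hb1]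
    exact Or.inr (Or.inr (Or.inl ⟨rfl, rfl⟩))
  · refine triangle_force hp hind hlen hb ha ⟨fun h => hvne.symm (congrArg Fin.val h), Or.inl ?_⟩
    rw [ha1, hb1]
    exact Or.inr (Or.inr (Or.inl ⟨rfl, rfl⟩))
  · omega

lemma excl_23 : v23 k ∉ p.support := by
  intro hw
  have h0 := excl_y hk hp hind hlen
  obtain ⟨a, b, hne, ha, hb⟩ := cycle_two_nbrs hp hw
  have hsa : a ∈ p.support := Walk.snd_mem_support_of_mem_edges p ha
  have hsb : b ∈ p.support := Walk.snd_mem_support_of_mem_edges p hb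
  have ha0 : a.val ≠ 2*k+2 := fun h => h0 ((Fin.ext (h.trans rfl) : a = vyy k) ▸ hsa)
  have hb0 : b.val ≠ 2*k+2 := fun h => h0 ((Fin.ext (h.trans rfl) : b = vyy k) ▸ hsb)
  have hva : a.val = 2*k+1 ∨ a.val = 2*k+4 := by
    obtain ⟨-, h⟩ := Walk.adj_of_mem_edges p ha
    have := a.isLt
    simp only [R, v23] at h
    omega
  have hvb : b.val = 2*k+1 ∨ b.val = 2*k+4 := by
    obtain ⟨-, h⟩ := Walk.adj_of_mem_edges p hb
    have := b.isLt
    simp only [R, v23] at h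
    omega
  have hvne := val_ne_of_ne hne
  rcases hva with ha1 | ha1 <;> rcases hvb with hb1 | hb1
  · omega
  · refine triangle_force hp hind hlen ha hb ⟨fun h => hvne (congrArg Fin.val h), Or.inl ?_⟩
    rw [ha1, hb1]
    exact Or.inr (Or.inr (Or.inr (Or.inr (Or.inr ⟨rfl, rfl⟩))))
  · refine triangle_force hp hind hlen hb ha ⟨fun h => hvne.symm (congrArg Fin.val h), Or.inl ?_⟩
    rw [ha1, hb1]
    exact Or.inr (Or.inr (Or.inr (Or.inr (Or.inr ⟨rfl, rfl⟩))))
  · omega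

end Excl

lemma chordal_bound (hk : 1 ≤ k) {v : Fin (4*k+4)} {p : (GG k).Walk v v}
    (hp : p.IsCycle)
    (hind : ∀ a b, a ∈ p.support → b ∈ p.support → (GG k).Adj a b → s(a, b) ∈ p.edges) :
    p.length ≤ 4*k := by
  by_cases hlen : p.length = 3
  · omega
  · have h1 := excl0 hk hp hind hlen
    have h2 := excl_y hk hp hind hlen
    have h3 := excl_z hk hp hind hlen
    have h4 := excl_23 hk hp hind hlen
    set S : Finset (Fin (4*k+4)) := {vx k, vyy k, v23 k, vzz k} with hS
    have n1 : vx k ∉ ({vyy k, v23 k, vzz k} : Finset (Fin (4*k+4))) := by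
      simp only [Finset.mem_insert, Finset.mem_singleton, vx, vyy, v23, vzz, Fin.ext_iff]
      omega
    have n2 : vyy k ∉ ({v23 k, vzz k} : Finset (Fin (4*k+4))) := by
      simp only [Finset.mem_insert, Finset.mem_singleton, vyy, v23, vzz, Fin.ext_iff]
      omega
    have n3 : v23 k ∉ ({vzz k} : Finset (Fin (4*k+4))) := by
      simp only [Finset.mem_singleton, v23, vzz, Fin.ext_iff]
      omega
    have hScard : S.card = 4 := by
      rw [hS, Finset.card_insert_of_notMem n1, Finset.card_insert_of_notMem n2,
        Finset.card_insert_of_notMem n3, Finset.card_singleton]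
    have hsub : p.support.tail.toFinset ⊆ Finset.univ \ S := by
      intro x hx
      rw [List.mem_toFinset] at hx
      have hxs : x ∈ p.support := List.mem_of_mem_tail hx
      rw [Finset.mem_sdiff]
      refine ⟨Finset.mem_univ x, ?_⟩
      rw [hS]
      simp only [Finset.mem_insert, Finset.mem_singleton]
      rintro (h | h | h | h) <;> subst h
      · exact h1 hxs
      · exact h2 hxs
      · exact h4 hxs
      · exact h3 hxs
    have hcard := Finset.card_le_card hsub
    rw [List.toFinset_card_of_nodup hp.support_nodup] at hcard
    rw [Finset.card_sdiff_of_subset (Finset.subset_univ S), hScard] at hcard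
    have hlen2 : p.support.tail.length = p.length := by
      have := Walk.length_support p
      have := List.length_tail (l := p.support)
      omega
    rw [hlen2] at hcard
    simp only [Finset.card_univ, Fintype.card_fin] at hcard
    omega

/-! ## the induced cycle of length 4k -/

def va (k : ℕ) : Fin (4*k+4) := ⟨1, by omega⟩
def vbb (k : ℕ) : Fin (4*k+4) := ⟨2*k+1, by omega⟩
def vcc (k : ℕ) (hk : 1 ≤ k) : Fin (4*k+4) := ⟨2*k+4, by omega⟩
def vdd (k : ℕ) : Fin (4*k+4) := ⟨4*k+2, by omega⟩

lemma chord2 : (GG k).Adj (va k) (vdd k) := by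
  refine ⟨fun h => ?_, Or.inl (Or.inr (Or.inr (Or.inl ⟨rfl, rfl⟩)))⟩
  have := congrArg Fin.val h
  simp only [va, vdd] at this
  omega

lemma chord1 (hk : 1 ≤ k) : (GG k).Adj (vbb k) (vcc k hk) := by
  refine ⟨fun h => ?_, Or.inl (Or.inr (Or.inr (Or.inr (Or.inr (Or.inr ⟨rfl, rfl⟩)))))⟩
  have := congrArg Fin.val h
  simp only [vbb, vcc] at this
  omega

def wQ (k : ℕ) (hk : 1 ≤ k) : (GG k).Walk (vdd k) (va k) :=
  (walkUp (2*k-2) (vcc k hk) (vdd k) (by simp only [vcc, vdd]; omega)).reverse.append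
    (Walk.cons (chord1 hk).symm (walkUp (2*k) (va k) (vbb k) (by simp only [va, vbb]; omega)).reverse)

def wC (k : ℕ) (hk : 1 ≤ k) : (GG k).Walk (va k) (va k) :=
  Walk.cons chord2 (wQ k hk)

lemma wC_length (hk : 1 ≤ k) : (wC k hk).length = 4*k := by
  simp only [wC, wQ, Walk.length_cons, Walk.length_append, Walk.length_reverse, walkUp_length]
  omega

lemma wQ_support (hk : 1 ≤ k) :
    (wQ k hk).support =
      (walkUp (2*k-2) (vcc k hk) (vdd k) (by simp only [vcc, vdd]; omega)).support.reverse ++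
      (walkUp (2*k) (va k) (vbb k) (by simp only [va, vbb]; omega)).support.reverse := by
  rw [wQ, Walk.support_append, Walk.support_reverse]
  congr 1
  rw [Walk.support_cons]
  simp only [List.tail_cons, Walk.support_reverse]

lemma mem_wQ_support (hk : 1 ≤ k) {x : Fin (4*k+4)} :
    x ∈ (wQ k hk).support ↔
      (1 ≤ x.val ∧ x.val ≤ 2*k+1) ∨ (2*k+4 ≤ x.val ∧ x.val ≤ 4*k+2) := by
  rw [wQ_support hk, List.mem_append, List.mem_reverse, List.mem_reverse,
    mem_walkUp_support, mem_walkUp_support]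
  simp only [va, vbb, vcc, vdd]
  omega

lemma mem_wC_support (hk : 1 ≤ k) {x : Fin (4*k+4)} :
    x ∈ (wC k hk).support ↔
      (1 ≤ x.val ∧ x.val ≤ 2*k+1) ∨ (2*k+4 ≤ x.val ∧ x.val ≤ 4*k+2) := by
  rw [wC, Walk.support_cons, List.mem_cons, mem_wQ_support hk]
  constructor
  · rintro (h | h)
    · left
      have := congrArg Fin.val h
      simp only [va] at this
      omega
    · exact h
  · exact fun h => Or.inr h

lemma wQ_edges (hk : 1 ≤ k) :
    (wQ k hk).edges =
      (walkUp (2*k-2) (vcc k hk) (vdd k) (by simp only [vcc, vdd]; omega)).edges.reverse ++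
      (s(vcc k hk, vbb k) ::
        (walkUp (2*k) (va k) (vbb k) (by simp only [va, vbb]; omega)).edges.reverse) := by
  rw [wQ, Walk.edges_append, Walk.edges_reverse, Walk.edges_cons, Walk.edges_reverse]

lemma wC_isCycle (hk : 1 ≤ k) : (wC k hk).IsCycle := by
  rw [wC, Walk.cons_isCycle_iff]
  constructor
  · -- wQ is a path
    apply Walk.IsPath.mk'
    have hmap : ((wQ k hk).support.map Fin.val).Nodup := by
      rw [wQ_support hk]
      rw [List.map_append, List.map_reverse, List.map_reverse,
        walkUp_support_val, walkUp_support_val]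
      refine List.Nodup.append ?_ ?_ ?_
      · exact List.nodup_reverse.mpr List.nodup_range'
      · exact List.nodup_reverse.mpr List.nodup_range'
      · intro x hx hy
        rw [List.mem_reverse, List.mem_range'_1] at hx hy
        simp only [va, vbb, vcc, vdd] at hx hy
        omega
    exact hmap.of_map
  · -- chord not among wQ edges
    intro hmem
    rw [wQ_edges hk] at hmem
    rw [List.mem_append, List.mem_cons] at hmem
    rcases hmem with hmem | hmem | hmem
    · rw [List.mem_reverse] at hmem
      have := walkUp_edges_shape hmem
      simp only [va, vcc, vdd] at this
      omega
    · rw [Sym2.eq_iff] at hmem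
      rcases hmem with ⟨h1, -⟩ | ⟨h1, -⟩ <;>
        · have := congrArg Fin.val h1
          simp only [va, vbb, vcc, vdd] at this
          omega
    · rw [List.mem_reverse] at hmem
      have := walkUp_edges_shape hmem
      simp only [va, vbb, vdd] at this
      omega

lemma wC_edges_mem1 (hk : 1 ≤ k) {x y : Fin (4*k+4)}
    (hx : 1 ≤ x.val) (hy : y.val = x.val + 1) (hyb : y.val ≤ 2*k+1) :
    s(x, y) ∈ (wC k hk).edges := by
  rw [wC, Walk.edges_cons, List.mem_cons, wQ_edges hk]
  right
  rw [List.mem_append, List.mem_cons]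
  right; right
  rw [List.mem_reverse]
  exact walkUp_edges_mem (by simpa [va] using hx) hy (by simpa [vbb] using hyb)

lemma wC_edges_mem2 (hk : 1 ≤ k) {x y : Fin (4*k+4)}
    (hx : 2*k+4 ≤ x.val) (hy : y.val = x.val + 1) (hyb : y.val ≤ 4*k+2) :
    s(x, y) ∈ (wC k hk).edges := by
  rw [wC, Walk.edges_cons, List.mem_cons, wQ_edges hk]
  right
  rw [List.mem_append]
  left
  rw [List.mem_reverse]
  exact walkUp_edges_mem (by simpa [vcc] using hx) hy (by simpa [vdd] using hyb)

lemma wC_induced_aux (hk : 1 ≤ k) {a b : Fin (4*k+4)}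
    (hsa : (1 ≤ a.val ∧ a.val ≤ 2*k+1) ∨ (2*k+4 ≤ a.val ∧ a.val ≤ 4*k+2))
    (hsb : (1 ≤ b.val ∧ b.val ≤ 2*k+1) ∨ (2*k+4 ≤ b.val ∧ b.val ≤ 4*k+2))
    (hR : R k a.val b.val) : s(a, b) ∈ (wC k hk).edges := by
  rcases hR with h | ⟨h1, h2⟩ | ⟨h1, h2⟩ | ⟨h1, h2⟩ | ⟨h1, h2⟩ | ⟨h1, h2⟩
  · -- b = a + 1
    rcases hsa with ha | ha <;> rcases hsb with hb | hb
    · exact wC_edges_mem1 hk (by omega) h (by omega)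
    · omega
    · omega
    · exact wC_edges_mem2 hk (by omega) h (by omega)
  · omega
  · -- chord (1, 4k+2)
    have hax : a = va k := Fin.ext (by simp [va, h1])
    have hbx : b = vdd k := Fin.ext (by simp [vdd, h2])
    rw [hax, hbx, wC, Walk.edges_cons]
    exact List.mem_cons_self
  · omega
  · omega
  · -- chord (2k+1, 2k+4)
    have hax : a = vbb k := Fin.ext (by simp [vbb, h1])
    have hbx : b = vcc k hk := Fin.ext (by simp [vcc, h2])
    rw [hax, hbx, Sym2.eq_swap, wC, Walk.edges_cons, List.mem_cons, wQ_edges hk]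
    right
    rw [List.mem_append, List.mem_cons]
    right; left
    rfl

lemma wC_induced (hk : 1 ≤ k) {a b : Fin (4*k+4)}
    (hsa : a ∈ (wC k hk).support) (hsb : b ∈ (wC k hk).support)
    (hadj : (GG k).Adj a b) : s(a, b) ∈ (wC k hk).edges := by
  rw [mem_wC_support hk] at hsa hsb
  rcases hadj.2 with hR | hR
  · exact wC_induced_aux hk hsa hsb hR
  · rw [Sym2.eq_swap]
    exact wC_induced_aux hk hsb hsa hR

end Sharp

/-- For every `k ≥ 1` there is a finite connected graph of chordality exactly `4k`
(every induced cycle has length at most `4k`, and some induced cycle has length `4k`)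
whose slimness equals `k + 1`; hence the bound `sl(G) ≤ ⌊k/4⌋ + 1` for `k`-chordal
graphs is sharp. -/
theorem exists_graph_slimness_chordality_sharp (k : ℕ) (hk : 1 ≤ k) :
    ∃ (V : Type) (_ : Fintype V) (G : SimpleGraph V),
      G.Connected ∧ KChordal G (4 * k) ∧
      (∃ (v : V) (p : G.Walk v v), IsInducedCycle G p ∧ p.length = 4 * k) ∧
      slimness G = k + 1 := by
  refine ⟨Fin (4*k+4), inferInstance, Sharp.GG k, Sharp.GG_connected, ?_, ?_,
    Sharp.slimness_eq⟩
  · intro v p hp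
    exact Sharp.chordal_bound hk hp.1 hp.2
  · exact ⟨Sharp.va k, Sharp.wC k hk,
      ⟨Sharp.wC_isCycle hk, fun a b hsa hsb hadj => Sharp.wC_induced hk hsa hsb hadj⟩,
      Sharp.wC_length hk⟩
end
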